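/- arXiv:2307.00301 — 7 statements merged into one kernel-verified Lean document; each statement's English description precedes it below -/
import Mathlib

section
/- In a rooted tree, if vertex a is a strict ancestor of vertex b (lying on the path from the root to b but not equal to b's parent or to b), then a and b are not adjacent in the tree; and in any three permutations p₁,p₂,p₃ constituting a word representing the tree permutationally, a and b do not alternate in p₁p₂p₃ (there exist i ≠ j with a preceding b in p_i and b preceding a in p_j). -/
/-- Letters `a` and `b` alternate in the word `w` if the subword of `w` obtained by
keeping only the occurrences of `a` and `b` has no two equal consecutive letters. -/
def Alternates {V : Type*} [DecidableEq V] (w : List V) (a b : V) : Prop :=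
  (w.filter fun x => decide (x = a ∨ x = b)).Chain' (· ≠ ·)

/-- The word `w` represents the simple graph `G`: distinct vertices are adjacent
iff they alternate in `w`. -/
def Represents {V : Type*} [DecidableEq V] (w : List V) (G : SimpleGraph V) : Prop :=
  ∀ a b : V, a ≠ b → (G.Adj a b ↔ Alternates w a b)

/-- The list `p` is a permutation of the type `V`: it has no duplicates and
contains every element of `V`. -/
def IsPermList {V : Type*} (p : List V) : Prop :=
  p.Nodup ∧ ∀ x : V, x ∈ p

/-- `a` precedes `b` in the list `p`. -/
def Precedes {V : Type*} [DecidableEq V] (p : List V) (a b : V) : Prop :=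
  p.idxOf a < p.idxOf b

lemma precedes_of_filter {V : Type*} [DecidableEq V] {a b : V} (hab : a ≠ b) :
    ∀ p : List V, a ∈ p → p.filter (fun x => decide (x = a ∨ x = b)) = [a, b] →
      Precedes p a b := by
  intro p
  induction p with
  | nil => intro h; simp at h
  | cons x t ih =>
    intro ha hf
    by_cases hxa : x = a
    · subst hxa
      unfold Precedes
      rw [List.idxOf_cons_self, List.idxOf_cons_ne _ hab]
      exact Nat.succ_pos _
    · by_cases hxb : x = b
      · subst hxb
        simp only [List.filter_cons, decide_eq_true_eq, or_true, if_pos, ite_true,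
          List.cons.injEq] at hf
        exact absurd hf.1 hxa
      · have ha' : a ∈ t := by
          rcases List.mem_cons.mp ha with h | h
          · exact absurd h.symm hxa
          · exact h
        have hf' : t.filter (fun y => decide (y = a ∨ y = b)) = [a, b] := by
          simpa [List.filter_cons, hxa, hxb] using hf
        have := ih ha' hf'
        unfold Precedes at this ⊢
        rw [List.idxOf_cons_ne _ hxa, List.idxOf_cons_ne _ hxb]
        omega

lemma filter_pair {V : Type*} [DecidableEq V] {a b : V} (hab : a ≠ b) {p : List V}
    (hp : IsPermList p) :
    p.filter (fun x => decide (x = a ∨ x = b)) = [a, b] ∨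
      p.filter (fun x => decide (x = a ∨ x = b)) = [b, a] := by
  set l := p.filter (fun x => decide (x = a ∨ x = b)) with hl
  have hnd : l.Nodup := hp.1.filter _
  have ha : a ∈ l := List.mem_filter.mpr ⟨hp.2 a, by simp⟩
  have hb : b ∈ l := List.mem_filter.mpr ⟨hp.2 b, by simp⟩
  have hperm : l.Perm [a, b] := by
    apply List.perm_iff_count.mpr
    intro x
    by_cases hxa : x = a
    · subst hxa
      rw [List.count_eq_one_of_mem hnd ha]
      simp [List.count_cons, hab.symm]
    · by_cases hxb : x = b
      · subst hxb
        rw [List.count_eq_one_of_mem hnd hb]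
        simp [List.count_cons, hab]
      · rw [List.count_eq_zero.mpr, List.count_eq_zero.mpr]
        · simp [hxa, hxb]
        · intro hx
          have := (List.mem_filter.mp hx).2
          simp [hxa, hxb] at this
  obtain ⟨x, y, hxy⟩ := List.length_eq_two.mp hperm.length_eq
  rw [hxy] at ha hb ⊢
  simp only [List.mem_cons, List.mem_singleton, List.not_mem_nil, or_false] at ha hb
  rcases ha with rfl | rfl
  · rcases hb with rfl | rfl
    · exact absurd rfl hab
    · left; rfl
  · rcases hb with rfl | rfl
    · right; rfl
    · exact absurd rfl hab

/-- In a tree rooted at `r`, if `a` is a strict ancestor of `b` (it lies on every path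
from `r` to `b`, is distinct from `b`, and is not the parent of `b`, i.e. not the
penultimate vertex of the path), then `a` and `b` are not adjacent, and in any three
permutations `p₁ p₂ p₃` constituting a word representing the tree permutationally,
`a` and `b` do not alternate: for some `i ≠ j`, `a` precedes `b` in `pᵢ` and `b`
precedes `a` in `pⱼ`. -/
theorem strict_ancestor_not_alternating {V : Type*} [DecidableEq V]
    (T : SimpleGraph V) (hT : T.IsTree) (r a b : V)
    (p₁ p₂ p₃ : List V) (hp₁ : IsPermList p₁) (hp₂ : IsPermList p₂) (hp₃ : IsPermList p₃)
    (hrep : Represents (p₁ ++ p₂ ++ p₃) T)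
    (hanc : ∀ w : T.Walk r b, w.IsPath → a ∈ w.support)
    (hab : a ≠ b)
    (hpar : ∀ w : T.Walk r b, w.IsPath → a ≠ w.getVert (w.length - 1)) :
    ¬ T.Adj a b ∧
      ∃ i j : Fin 3, i ≠ j ∧ Precedes ([p₁, p₂, p₃].get i) a b ∧
        Precedes ([p₁, p₂, p₃].get j) b a := by
  have hnadj : ¬ T.Adj a b := by
    intro h
    obtain ⟨w, hw, -⟩ := hT.existsUnique_path r b
    have haw := hanc w hw
    have heq : w.dropUntil a haw = SimpleGraph.Walk.cons h SimpleGraph.Walk.nil := by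
      have := hT.IsAcyclic.path_unique ⟨w.dropUntil a haw, hw.dropUntil haw⟩
        (SimpleGraph.Path.singleton h)
      exact congrArg Subtype.val this
    have hspec := w.take_spec haw
    have hlen : w.length = (w.takeUntil a haw).length + 1 := by
      conv_lhs => rw [← hspec]
      rw [SimpleGraph.Walk.length_append, heq]
      rfl
    apply hpar w hw
    conv_rhs => rw [← hspec]
    rw [SimpleGraph.Walk.getVert_append]
    have h1 : ((w.takeUntil a haw).append (w.dropUntil a haw)).length - 1 =
        (w.takeUntil a haw).length := by
      rw [hspec]; omega
    rw [h1, if_neg (lt_irrefl _), Nat.sub_self, heq]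
    rfl
  refine ⟨hnadj, ?_⟩
  have hna : ¬ Alternates (p₁ ++ p₂ ++ p₃) a b := fun hA => hnadj ((hrep a b hab).mpr hA)
  have key : ∀ p : List V, p.filter (fun x => decide (x = a ∨ x = b)) = [b, a] →
      Precedes p b a := by
    intro p hf
    apply precedes_of_filter hab.symm p
    · have : b ∈ p.filter (fun x => decide (x = a ∨ x = b)) := by rw [hf]; simp
      exact (List.mem_filter.mp this).1
    · rw [← hf]
      exact List.filter_congr fun x _ => decide_eq_decide.mpr or_comm
  have key' : ∀ p : List V, a ∈ p → p.filter (fun x => decide (x = a ∨ x = b)) = [a, b] →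
      Precedes p a b := precedes_of_filter hab
  have hchain : ∀ c d : V, c ≠ d →
      ¬ (p₁.filter (fun x => decide (x = a ∨ x = b)) = [c, d] ∧
         p₂.filter (fun x => decide (x = a ∨ x = b)) = [c, d] ∧
         p₃.filter (fun x => decide (x = a ∨ x = b)) = [c, d]) := by
    rintro c d hcd ⟨h1, h2, h3⟩
    apply hna
    unfold Alternates
    rw [List.filter_append, List.filter_append, h1, h2, h3]
    simp [List.Chain', List.isChain_cons_cons, hcd, hcd.symm]
  rcases filter_pair hab hp₁ with h1 | h1 <;>
    rcases filter_pair hab hp₂ with h2 | h2 <;>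
      rcases filter_pair hab hp₃ with h3 | h3
  · exact absurd ⟨h1, h2, h3⟩ (hchain a b hab)
  · exact ⟨0, 2, by decide, key' p₁ (hp₁.2 a) h1, key p₃ h3⟩
  · exact ⟨0, 1, by decide, key' p₁ (hp₁.2 a) h1, key p₂ h2⟩
  · exact ⟨0, 1, by decide, key' p₁ (hp₁.2 a) h1, key p₂ h2⟩
  · exact ⟨1, 0, by decide, key' p₂ (hp₂.2 a) h2, key p₁ h1⟩
  · exact ⟨1, 0, by decide, key' p₂ (hp₂.2 a) h2, key p₁ h1⟩
  · exact ⟨2, 0, by decide, key' p₃ (hp₃.2 a) h3, key p₁ h1⟩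
  · exact absurd ⟨h1, h2, h3⟩ (hchain b a hab.symm)
end

section
/- For n ≥ 3, the path graph P_n has permutation-representation number exactly 2. -/
/-- The permutation-representation number of `G`: the least `k ≥ 1` such that `G` is
represented by a concatenation of `k` permutations of its vertex set. -/
noncomputable def prn {V : Type*} [DecidableEq V] (G : SimpleGraph V) : ℕ :=
  sInf {k | 0 < k ∧ ∃ ps : List (List V), ps.length = k ∧
    (∀ p ∈ ps, IsPermList p) ∧ Represents ps.flatten G}

section Aux

variable {V : Type*} [DecidableEq V]

lemma filter_pair_nil {a b : V} : ∀ (p : List V), a ∉ p → b ∉ p →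
    (p.filter fun x => decide (x = a ∨ x = b)) = [] := by
  intro p ha hb
  rw [List.filter_eq_nil_iff]
  intro x hx
  simp only [decide_eq_true_eq]
  rintro (rfl | rfl) <;> [exact ha hx; exact hb hx]

lemma filter_pair_single {a b : V} : ∀ (p : List V), p.Nodup → b ∈ p → a ∉ p →
    (p.filter fun x => decide (x = a ∨ x = b)) = [b] := by
  intro p
  induction p with
  | nil => simp
  | cons x xs ih =>
    intro hnd hb ha
    simp only [List.nodup_cons] at hnd
    have hax : a ∉ xs := fun h => ha (List.mem_cons_of_mem _ h)
    rcases List.mem_cons.1 hb with rfl | hb'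
    · have h0 : (xs.filter fun y => decide (y = a ∨ y = b)) = [] :=
        filter_pair_nil xs hax hnd.1
      rw [List.filter_cons_of_pos (by simp), h0]
    · have hxb : x ≠ b := fun h => hnd.1 (h ▸ hb')
      have hxa : x ≠ a := fun h => ha (h ▸ (List.mem_cons_self : x ∈ x :: xs))
      rw [List.filter_cons_of_neg (by simp [hxa, hxb]), ih hnd.2 hb' hax]

lemma filter_pair_s8 {R : V → V → Prop} {a b : V} (hne : a ≠ b) :
    ∀ (p : List V), p.Nodup → p.Pairwise R → a ∈ p → b ∈ p →
    ((p.filter fun x => decide (x = a ∨ x = b)) = [a, b] ∧ R a b) ∨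
    ((p.filter fun x => decide (x = a ∨ x = b)) = [b, a] ∧ R b a) := by
  intro p
  induction p with
  | nil => simp
  | cons x xs ih =>
    intro hnd hpw ha hb
    simp only [List.nodup_cons] at hnd
    simp only [List.pairwise_cons] at hpw
    rcases List.mem_cons.1 ha with rfl | ha'
    · -- head is a
      have hb' : b ∈ xs := by
        rcases List.mem_cons.1 hb with h | h
        · exact absurd h.symm hne
        · exact h
      have hax : a ∉ xs := hnd.1
      left
      constructor
      · have h0 : (xs.filter fun y => decide (y = a ∨ y = b)) = [b] :=
          filter_pair_single xs hnd.2 hb' hax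
        rw [List.filter_cons_of_pos (by simp), h0]
      · exact hpw.1 b hb'
    · rcases List.mem_cons.1 hb with rfl | hb'
      · -- head is b
        have hbx : b ∉ xs := hnd.1
        right
        constructor
        · have h0 : (xs.filter fun y => decide (y = b ∨ y = a)) = [a] :=
            filter_pair_single xs hnd.2 ha' hbx
          have h2 : (xs.filter fun y => decide (y = a ∨ y = b)) = [a] := by
            rw [← h0]; congr 1; funext y; simp [or_comm]
          rw [List.filter_cons_of_pos (by simp), h2]
        · exact hpw.1 a ha'
      · have hxa : x ≠ a := fun h => hnd.1 (h ▸ ha')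
        have hxb : x ≠ b := fun h => hnd.1 (h ▸ hb')
        rw [List.filter_cons_of_neg (by simp [hxa, hxb])]
        exact ih hnd.2 hpw.2 ha' hb'

lemma alternates_append_perm {p q : List V} {a b : V} (hne : a ≠ b)
    (hp : (p.filter fun x => decide (x = a ∨ x = b)) = [a, b] ∨
          (p.filter fun x => decide (x = a ∨ x = b)) = [b, a])
    (hq : (q.filter fun x => decide (x = a ∨ x = b)) = [a, b] ∨
          (q.filter fun x => decide (x = a ∨ x = b)) = [b, a]) :
    Alternates (p ++ q) a b ↔
      (p.filter fun x => decide (x = a ∨ x = b)) = (q.filter fun x => decide (x = a ∨ x = b)) := by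
  unfold Alternates
  rw [List.filter_append]
  rcases hp with hp | hp <;> rcases hq with hq | hq <;>
    rw [hp, hq] <;> simp [List.Chain', List.isChain_cons_cons, hne, hne.symm]

end Aux

/-- For `n ≥ 3`, the path graph `P_n` has permutation-representation number exactly 2. -/
theorem prn_pathGraph (n : ℕ) (hn : 3 ≤ n) : prn (SimpleGraph.pathGraph n) = 2 := by
  classical
  set S : Set ℕ := {k | 0 < k ∧ ∃ ps : List (List (Fin n)), ps.length = k ∧
    (∀ p ∈ ps, IsPermList p) ∧ Represents ps.flatten (SimpleGraph.pathGraph n)} with hS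
  -- the two rank functions
  set f : Fin n → ℕ := fun i => 2 * i.val + i.val % 2 * 4 with hf
  set g : Fin n → ℕ := fun i => 2 * (n - i.val) + i.val % 2 * 4 with hg
  have hfinj : ∀ a b : Fin n, a ≠ b → f a ≠ f b := by
    intro a b hab
    have h1 : a.val ≠ b.val := fun h => hab (Fin.ext h)
    simp only [hf]
    omega
  have hginj : ∀ a b : Fin n, a ≠ b → g a ≠ g b := by
    intro a b hab
    have h1 : a.val ≠ b.val := fun h => hab (Fin.ext h)
    have h2 := a.isLt
    have h3 := b.isLt
    simp only [hg]
    omega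
  -- key arithmetic fact
  have hkey : ∀ a b : Fin n, a ≠ b →
      ((SimpleGraph.pathGraph n).Adj a b ↔ (f a < f b ↔ g a < g b)) := by
    intro a b hab
    have h1 : a.val ≠ b.val := fun h => hab (Fin.ext h)
    have h2 := a.isLt
    have h3 := b.isLt
    rw [SimpleGraph.pathGraph_adj]
    simp only [hf, hg]
    omega
  -- the two permutations
  set r1 : Fin n → Fin n → Prop := fun a b => f a ≤ f b with hr1
  set r2 : Fin n → Fin n → Prop := fun a b => g a ≤ g b with hr2
  haveI : DecidableRel r1 := fun a b => by unfold r1; infer_instance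
  haveI : DecidableRel r2 := fun a b => by unfold r2; infer_instance
  haveI : IsTotal (Fin n) r1 := ⟨fun a b => Nat.le_total _ _⟩
  haveI : IsTotal (Fin n) r2 := ⟨fun a b => Nat.le_total _ _⟩
  haveI : IsTrans (Fin n) r1 := ⟨fun a b c => Nat.le_trans⟩
  haveI : IsTrans (Fin n) r2 := ⟨fun a b c => Nat.le_trans⟩
  set p1 := List.insertionSort r1 (List.finRange n) with hp1
  set p2 := List.insertionSort r2 (List.finRange n) with hp2
  have hperm1 : List.Perm p1 (List.finRange n) := List.perm_insertionSort r1 _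
  have hperm2 : List.Perm p2 (List.finRange n) := List.perm_insertionSort r2 _
  have hnd1 : p1.Nodup := hperm1.nodup_iff.2 (List.nodup_finRange n)
  have hnd2 : p2.Nodup := hperm2.nodup_iff.2 (List.nodup_finRange n)
  have hmem1 : ∀ x : Fin n, x ∈ p1 := fun x => hperm1.mem_iff.2 (List.mem_finRange x)
  have hmem2 : ∀ x : Fin n, x ∈ p2 := fun x => hperm2.mem_iff.2 (List.mem_finRange x)
  have hsort1 : p1.Pairwise (fun a b => f a < f b) := by
    have hs : p1.Pairwise r1 := List.pairwise_insertionSort r1 _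
    have := hs.and (List.Pairwise.imp (fun {a b} h => h) hnd1)
    exact this.imp (fun {a b} h => lt_of_le_of_ne h.1 (hfinj a b h.2))
  have hsort2 : p2.Pairwise (fun a b => g a < g b) := by
    have hs : p2.Pairwise r2 := List.pairwise_insertionSort r2 _
    have := hs.and (List.Pairwise.imp (fun {a b} h => h) hnd2)
    exact this.imp (fun {a b} h => lt_of_le_of_ne h.1 (hginj a b h.2))
  -- 2 ∈ S
  have h2S : 2 ∈ S := by
    refine ⟨by norm_num, [p1, p2], rfl, ?_, ?_⟩
    · intro p hp
      rcases List.mem_cons.1 hp with rfl | hp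
      · exact ⟨hnd1, hmem1⟩
      · rcases List.mem_cons.1 hp with rfl | hp
        · exact ⟨hnd2, hmem2⟩
        · simp at hp
    · intro a b hab
      have hflat : ([p1, p2] : List (List (Fin n))).flatten = p1 ++ p2 := by
        simp [List.flatten]
      rw [hflat]
      have hF1 := filter_pair_s8 (R := fun a b => f a < f b) hab p1 hnd1 hsort1 (hmem1 a) (hmem1 b)
      have hF2 := filter_pair_s8 (R := fun a b => g a < g b) hab p2 hnd2 hsort2 (hmem2 a) (hmem2 b)
      have halt := alternates_append_perm hab
        (hp := hF1.imp (fun h => h.1) (fun h => h.1))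
        (hq := hF2.imp (fun h => h.1) (fun h => h.1))
      rw [halt, hkey a b hab]
      constructor
      · intro hiff
        rcases hF1 with ⟨e1, l1⟩ | ⟨e1, l1⟩ <;> rcases hF2 with ⟨e2, l2⟩ | ⟨e2, l2⟩
        · rw [e1, e2]
        · exact absurd (hiff.1 l1) (Nat.lt_asymm l2)
        · exact absurd (hiff.2 l2) (Nat.lt_asymm l1)
        · rw [e1, e2]
      · intro heq
        rcases hF1 with ⟨e1, l1⟩ | ⟨e1, l1⟩ <;> rcases hF2 with ⟨e2, l2⟩ | ⟨e2, l2⟩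
        · exact ⟨fun _ => l2, fun _ => l1⟩
        · rw [e1, e2] at heq; simp [hab] at heq
        · rw [e1, e2] at heq; simp [hab] at heq
        · constructor
          · intro h; exact absurd h (Nat.lt_asymm l1)
          · intro h; exact absurd h (Nat.lt_asymm l2)
  -- lower bound: no m < 2 in S
  have hlb : ∀ m ∈ S, 2 ≤ m := by
    rintro m ⟨hm0, ps, hlen, hperm, hrep⟩
    by_contra hlt
    push_neg at hlt
    interval_cases m
    · -- m = 1
      obtain ⟨p, rfl⟩ : ∃ p, ps = [p] := by
        match ps, hlen with
        | [p], _ => exact ⟨p, rfl⟩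
      have hp := hperm p List.mem_cons_self
      have hflat : ([p] : List (List (Fin n))).flatten = p := by simp [List.flatten]
      rw [hflat] at hrep
      -- vertices 0 and 2 are distinct, non-adjacent, but alternate in any permutation
      have h0 : (0 : ℕ) < n := by omega
      have h2 : (2 : ℕ) < n := by omega
      set u : Fin n := ⟨0, h0⟩
      set v : Fin n := ⟨2, h2⟩
      have huv : u ≠ v := by
        intro h
        have := Fin.val_eq_val u v |>.2 h
        simp [u, v] at this
      have hnadj : ¬ (SimpleGraph.pathGraph n).Adj u v := by
        rw [SimpleGraph.pathGraph_adj]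
        simp [u, v]
      have hpw : p.Pairwise (fun _ _ => True) := List.pairwise_of_forall (fun _ _ => trivial)
      have hF := filter_pair_s8 (R := fun _ _ : Fin n => True) huv p hp.1 hpw (hp.2 u) (hp.2 v)
      have halt : Alternates p u v := by
        unfold Alternates
        rcases hF with ⟨e, _⟩ | ⟨e, _⟩ <;> rw [e] <;> simp [List.Chain', List.isChain_cons_cons, huv, huv.symm]
      exact hnadj ((hrep u v huv).2 halt)
  have h1 : prn (SimpleGraph.pathGraph n) ≤ 2 := Nat.sInf_le h2S
  have h2 : 2 ≤ prn (SimpleGraph.pathGraph n) := le_csInf ⟨2, h2S⟩ hlb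
  omega
end

section
/- For odd n ≥ 3, the word p₂p₃ with p₂ = a₂a₁a₄a₃a₆a₅⋯a_{n−1}a_{n−2}a_n and p₃ = a_{n−1}a_n a_{n−3}a_{n−2}⋯a₄a₅a₂a₃a₁ represents the path P_n permutationally. -/
open Fin.NatCast

/- ### Auxiliary machinery -/

private lemma filter_range_single (s n : ℕ) (h : s < n) :
    (List.range n).filter (fun i => decide (i = s)) = [s] := by
  induction n with
  | zero => omega
  | succ n ih =>
    rw [List.range_succ, List.filter_append]
    rcases Nat.lt_or_ge s n with h' | h'
    · rw [ih h']
      have : n ≠ s := by omega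
      simp [this]
    · have hs : s = n := by omega
      subst hs
      have : (List.range s).filter (fun i => decide (i = s)) = [] := by
        apply List.filter_eq_nil_iff.mpr
        intro x hx
        simp at hx ⊢
        omega
      simp [this]

private lemma filter_range_pair {s t n : ℕ} (hst : s < t) (h : t < n) :
    (List.range n).filter (fun i => decide (i = s ∨ i = t)) = [s, t] := by
  induction n with
  | zero => omega
  | succ n ih =>
    rw [List.range_succ, List.filter_append]
    rcases Nat.lt_or_ge t n with h' | h'
    · rw [ih h']
      have h1 : n ≠ s := by omega
      have h2 : n ≠ t := by omega
      simp [h1, h2]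
    · have ht : t = n := by omega
      subst ht
      have e : (List.range t).filter (fun i => decide (i = s ∨ i = t)) =
          (List.range t).filter (fun i => decide (i = s)) := by
        apply List.filter_congr
        intro x hx
        simp at hx ⊢
        omega
      rw [e, filter_range_single s t hst]
      simp

private lemma flatMap_eq_map {α : Type*} (A : ℕ → α) (m : ℕ) :
    (List.range m).flatMap (fun k => [A (2*k), A (2*k+1)]) = (List.range (2*m)).map A := by
  induction m with
  | zero => simp
  | succ m ih =>
    rw [List.range_succ, List.flatMap_append, ih]
    have h : 2*(m+1) = (2*m+1)+1 := by ring
    rw [h, List.range_succ, List.range_succ]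
    simp

/-- Filtering a word of the shape `map A (range m) ++ [c]` down to the letters `a, b`,
where the position of `a` is `fa` and the position of `b` is `fb` (position `m` being
the final letter `c`). -/
private lemma filter_part {V : Type*} [DecidableEq V] (A : ℕ → V) (c : V) (m : ℕ)
    (a b : V) (hab : a ≠ b) (fa fb : ℕ)
    (hA : ∀ i < m, (A i = a ↔ i = fa) ∧ (A i = b ↔ i = fb))
    (hca : c = a ↔ fa = m) (hcb : c = b ↔ fb = m)
    (hfa : fa ≤ m) (hfb : fb ≤ m) :
    ((List.range m).map A ++ [c]).filter (fun x => decide (x = a ∨ x = b)) =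
      if fa < fb then [a, b] else [b, a] := by
  have hne : fa ≠ fb := by
    intro h
    rcases Nat.lt_or_ge fa m with h' | h'
    · exact hab ((((hA fa h').1.mpr rfl).symm).trans ((hA fa h').2.mpr (by omega)))
    · have h1 : fa = m := by omega
      exact hab ((hca.mpr h1).symm.trans (hcb.mpr (by omega)))
  rw [List.filter_append, List.filter_map]
  by_cases ha : fa = m
  · -- a = c, a not in the map part
    have hac : c = a := hca.mpr ha
    have hbc : fb < m := by omega
    have e : (List.range m).filter ((fun x => decide (x = a ∨ x = b)) ∘ A) =
        (List.range m).filter (fun i => decide (i = fb)) := by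
      apply List.filter_congr
      intro i hi
      simp only [List.mem_range] at hi
      have h1 := (hA i hi).1
      have h2 := (hA i hi).2
      simp only [Function.comp_apply, decide_eq_decide]
      constructor
      · rintro (h | h)
        · exact absurd (h1.mp h) (by omega)
        · exact h2.mp h
      · intro h; exact Or.inr (h2.mpr h)
    rw [e, filter_range_single fb m hbc]
    have hb' : A fb = b := (hA fb hbc).2.mpr rfl
    have hlast : [c].filter (fun x => decide (x = a ∨ x = b)) = [a] := by
      simp [hac]
    rw [hlast]
    simp [hb', if_neg (by omega : ¬ fa < fb)]
  · by_cases hb : fb = m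
    · have hbcc : c = b := hcb.mpr hb
      have hac : fa < m := by omega
      have e : (List.range m).filter ((fun x => decide (x = a ∨ x = b)) ∘ A) =
          (List.range m).filter (fun i => decide (i = fa)) := by
        apply List.filter_congr
        intro i hi
        simp only [List.mem_range] at hi
        have h1 := (hA i hi).1
        have h2 := (hA i hi).2
        simp only [Function.comp_apply, decide_eq_decide]
        constructor
        · rintro (h | h)
          · exact h1.mp h
          · exact absurd (h2.mp h) (by omega)
        · intro h; exact Or.inl (h1.mpr h)
      rw [e, filter_range_single fa m hac]
      have ha' : A fa = a := (hA fa hac).1.mpr rfl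
      have hlast : [c].filter (fun x => decide (x = a ∨ x = b)) = [b] := by
        simp [hbcc]
      rw [hlast]
      simp [ha', if_pos (by omega : fa < fb)]
    · -- both in the map part
      have hfa' : fa < m := by omega
      have hfb' : fb < m := by omega
      have hcA : c ≠ a ∧ c ≠ b := ⟨fun h => ha (hca.mp h), fun h => hb (hcb.mp h)⟩
      have hlast : [c].filter (fun x => decide (x = a ∨ x = b)) = [] := by
        simp [hcA.1, hcA.2]
      rw [hlast]
      have ha' : A fa = a := (hA fa hfa').1.mpr rfl
      have hb' : A fb = b := (hA fb hfb').2.mpr rfl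
      rcases Nat.lt_or_ge fa fb with h | h
      · have e : (List.range m).filter ((fun x => decide (x = a ∨ x = b)) ∘ A) =
            (List.range m).filter (fun i => decide (i = fa ∨ i = fb)) := by
          apply List.filter_congr
          intro i hi
          simp only [List.mem_range] at hi
          simp only [Function.comp_apply, decide_eq_decide, (hA i hi).1, (hA i hi).2]
        rw [e, filter_range_pair h hfb']
        simp [ha', hb', if_pos h]
      · have h' : fb < fa := by omega
        have e : (List.range m).filter ((fun x => decide (x = a ∨ x = b)) ∘ A) =
            (List.range m).filter (fun i => decide (i = fb ∨ i = fa)) := by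
          apply List.filter_congr
          intro i hi
          simp only [List.mem_range] at hi
          simp only [Function.comp_apply, decide_eq_decide, (hA i hi).1, (hA i hi).2]
          tauto
        rw [e, filter_range_pair h' hfa']
        simp [ha', hb', if_neg (by omega : ¬ fa < fb)]

/-- Position of the vertex with value `α` in the permutation `p₂` (for `n = 2m+1`). -/
private def Fpos (m α : ℕ) : ℕ := if α = 2*m then 2*m else if α % 2 = 0 then α+1 else α-1
/-- Position of the vertex with value `α` in the permutation `p₃` (for `n = 2m+1`). -/
private def Gpos (m α : ℕ) : ℕ := if α = 0 then 2*m else if α % 2 = 0 then 2*m+1-α else 2*m-1-α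
/-- The letter at position `i < 2m` of `p₂`. -/
private def A2 (n : ℕ) [NeZero n] (i : ℕ) : Fin n :=
  ((if i % 2 = 0 then i+1 else i-1 : ℕ) : Fin n)
/-- The letter at position `i < 2m` of `p₃`. -/
private def A3 (n : ℕ) [NeZero n] (i : ℕ) : Fin n :=
  ((if i % 2 = 0 then n-2-i else n-i : ℕ) : Fin n)

private lemma A2_eq_iff (n m : ℕ) [NeZero n] (hn : n = 2*m+1) {i : ℕ} (hi : i < 2*m)
    (v : Fin n) : A2 n i = v ↔ i = Fpos m v.val := by
  have hv : v.val < n := v.isLt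
  rw [Fin.ext_iff, A2, Fpos, Fin.val_cast_of_lt (by split_ifs <;> omega)]
  split_ifs <;> omega

private lemma A3_eq_iff (n m : ℕ) [NeZero n] (hn : n = 2*m+1) {i : ℕ} (hi : i < 2*m)
    (v : Fin n) : A3 n i = v ↔ i = Gpos m v.val := by
  have hv : v.val < n := v.isLt
  rw [Fin.ext_iff, A3, Gpos, Fin.val_cast_of_lt (by split_ifs <;> omega)]
  split_ifs <;> omega

private lemma c2_eq_iff (n m : ℕ) [NeZero n] (hn : n = 2*m+1) (hm : 1 ≤ m) (v : Fin n) :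
    ((n-1:ℕ) : Fin n) = v ↔ Fpos m v.val = 2*m := by
  have hv : v.val < n := v.isLt
  rw [Fin.ext_iff, Fpos, Fin.val_cast_of_lt (by omega)]
  split_ifs <;> omega

private lemma c3_eq_iff (n m : ℕ) [NeZero n] (hn : n = 2*m+1) (hm : 1 ≤ m) (v : Fin n) :
    (0 : Fin n) = v ↔ Gpos m v.val = 2*m := by
  have hv : v.val < n := v.isLt
  rw [Fin.ext_iff, Gpos, Fin.val_zero]
  split_ifs <;> omega

private lemma Fpos_le (m v : ℕ) (h : v < 2*m+1) : Fpos m v ≤ 2*m := by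
  rw [Fpos]; split_ifs <;> omega

private lemma Gpos_le (m v : ℕ) (h : v < 2*m+1) : Gpos m v ≤ 2*m := by
  rw [Gpos]; split_ifs <;> omega

/-- The core arithmetic fact: two distinct vertices are at distance one on the path
iff their positions compare the same way in both permutations. -/
private lemma main_arith (m α β : ℕ) (hm : 1 ≤ m) (hα : α < 2*m+1) (hβ : β < 2*m+1)
    (hne : α ≠ β) :
    (α+1=β ∨ β+1=α) ↔ (Fpos m α < Fpos m β ↔ Gpos m α < Gpos m β) := by
  rw [Fpos, Fpos, Gpos, Gpos]
  split_ifs <;> omega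

/-- For odd `n ≥ 3`, the word `p₂p₃` with `p₂ = a₂a₁a₄a₃⋯a_{n−1}a_{n−2}a_n` and
`p₃ = a_{n−1}a_n a_{n−3}a_{n−2}⋯a₄a₅a₂a₃a₁` represents the path `P_n` permutationally.
Here `a_i` is the vertex `i - 1 : Fin n`. -/
theorem path_word_odd (n : ℕ) [NeZero n] (hn : 3 ≤ n) (hodd : Odd n) :
    Represents
      ((((List.range ((n - 1) / 2)).flatMap fun k =>
          [((2 * k + 1 : ℕ) : Fin n), ((2 * k : ℕ) : Fin n)]) ++ [((n - 1 : ℕ) : Fin n)]) ++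
       (((List.range ((n - 1) / 2)).flatMap fun k =>
          [((n - 2 - 2 * k : ℕ) : Fin n), ((n - 1 - 2 * k : ℕ) : Fin n)]) ++ [(0 : Fin n)]))
      (SimpleGraph.pathGraph n) := by
  obtain ⟨m, hnm⟩ := hodd
  have hm : 1 ≤ m := by omega
  have hrange : (n-1)/2 = m := by omega
  intro a b hab
  have hvab : a.val ≠ b.val := fun h => hab (Fin.ext h)
  have hva : a.val < n := a.isLt
  have hvb : b.val < n := b.isLt
  -- rewrite the two halves of the word as `map` over `range`
  have e2 : ((List.range ((n - 1) / 2)).flatMap fun k =>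
      [((2 * k + 1 : ℕ) : Fin n), ((2 * k : ℕ) : Fin n)]) = (List.range (2*m)).map (A2 n) := by
    rw [hrange, ← flatMap_eq_map (A2 n) m]
    have hfun : (fun k => [((2 * k + 1 : ℕ) : Fin n), ((2 * k : ℕ) : Fin n)]) =
        (fun k => [A2 n (2*k), A2 n (2*k+1)]) := by
      funext k
      have h1 : (2*k) % 2 = 0 := by omega
      have h2 : (2*k+1) % 2 = 1 := by omega
      simp [A2, h1, h2]
    rw [hfun]
  have e3 : ((List.range ((n - 1) / 2)).flatMap fun k =>
      [((n - 2 - 2 * k : ℕ) : Fin n), ((n - 1 - 2 * k : ℕ) : Fin n)]) =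
      (List.range (2*m)).map (A3 n) := by
    rw [hrange, ← flatMap_eq_map (A3 n) m]
    have hfun : (fun k => [((n - 2 - 2 * k : ℕ) : Fin n), ((n - 1 - 2 * k : ℕ) : Fin n)]) =
        (fun k => [A3 n (2*k), A3 n (2*k+1)]) := by
      funext k
      have h1 : (2*k) % 2 = 0 := by omega
      have h2 : (2*k+1) % 2 = 1 := by omega
      have h3 : n - 1 - 2*k = n - (2*k+1) := by omega
      simp [A3, h1, h2, h3]
    rw [hfun]
  rw [e2, e3]
  unfold Alternates
  rw [List.filter_append,
    filter_part (A2 n) _ (2*m) a b hab (Fpos m a.val) (Fpos m b.val)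
      (fun i hi => ⟨A2_eq_iff n m hnm hi a, A2_eq_iff n m hnm hi b⟩)
      (c2_eq_iff n m hnm hm a) (c2_eq_iff n m hnm hm b)
      (Fpos_le m a.val (by omega)) (Fpos_le m b.val (by omega)),
    filter_part (A3 n) _ (2*m) a b hab (Gpos m a.val) (Gpos m b.val)
      (fun i hi => ⟨A3_eq_iff n m hnm hi a, A3_eq_iff n m hnm hi b⟩)
      (c3_eq_iff n m hnm hm a) (c3_eq_iff n m hnm hm b)
      (Gpos_le m a.val (by omega)) (Gpos_le m b.val (by omega)),
    SimpleGraph.pathGraph_adj]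
  have harith := main_arith m a.val b.val hm (by omega) (by omega) hvab
  by_cases h1 : Fpos m a.val < Fpos m b.val <;>
    by_cases h2 : Gpos m a.val < Gpos m b.val <;>
      simp only [h1, h2, if_pos, if_neg, if_true, if_false, ite_true, ite_false] <;>
        simp [List.Chain', List.isChain_cons_cons, hab, hab.symm, harith, h1, h2]
end

section
/- For even n ≥ 4, the word p₂p₃ with p₂ = a₂a₁a₄a₃⋯a_{n−2}a_{n−3}a_n a_{n−1} and p₃ = a_n a_{n−2} a_{n−1} a_{n−4} a_{n−3}⋯a₄a₅a₂a₃a₁ represents the path P_n permutationally. -/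
namespace PathWordEvenAux

def gN (m : ℕ) : ℕ := if m % 2 = 0 then m + 1 else m - 1

def hN (n m : ℕ) : ℕ :=
  if m = 0 then n - 1 else if m = n - 1 then 0 else if m % 2 = 1 then n - 2 - m else n - m

lemma gN_lt {n m : ℕ} (he : n % 2 = 0) (hm : m < n) : gN m < n := by
  unfold gN; split_ifs <;> first | contradiction | omega

lemma gN_gN (m : ℕ) : gN (gN m) = m := by
  unfold gN; split_ifs <;> first | contradiction | omega

lemma hN_lt {n m : ℕ} (hn : 4 ≤ n) (hm : m < n) : hN n m < n := by
  unfold hN; split_ifs <;> first | contradiction | omega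

lemma hN_hN {n m : ℕ} (hn : 4 ≤ n) (he : n % 2 = 0) (hm : m < n) : hN n (hN n m) = m := by
  unfold hN; split_ifs <;> first | contradiction | omega

lemma key (n x y : ℕ) (hn : 4 ≤ n) (he : n % 2 = 0) (hx : x < n) (hy : y < n) (hxy : x ≠ y) :
    (x + 1 = y ∨ y + 1 = x) ↔ (gN x < gN y ↔ hN n x < hN n y) := by
  unfold gN hN; split_ifs <;> first | contradiction | omega

lemma flatMap_pairs {V : Type*} (u v : ℕ → V) (f : ℕ → V) (m : ℕ)
    (hu : ∀ k < m, u k = f (2 * k)) (hv : ∀ k < m, v k = f (2 * k + 1)) :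
    (List.range m).flatMap (fun k => [u k, v k]) = (List.range (2 * m)).map f := by
  induction m with
  | zero => simp
  | succ m ih =>
    rw [List.range_succ, List.flatMap_append,
      ih (fun k hk => hu k (by omega)) (fun k hk => hv k (by omega))]
    have h2 : 2 * (m + 1) = (2 * m + 1) + 1 := by ring
    rw [h2, List.range_succ, List.range_succ, List.map_append, List.map_append]
    simp [hu m (by omega), hv m (by omega)]

lemma filter_range_single (i j n : ℕ) (hin : i < n) (hjn : n ≤ j) :
    (List.range n).filter (fun m => decide (m = i ∨ m = j)) = [i] := by
  induction n with
  | zero => omega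
  | succ n ih =>
    rw [List.range_succ, List.filter_append]
    by_cases h : i = n
    · have h0 : (List.range n).filter (fun m => decide (m = i ∨ m = j)) = [] := by
        rw [List.filter_eq_nil_iff]
        intro m hm
        simp only [List.mem_range] at hm
        simp only [decide_eq_true_eq]
        omega
      subst h
      simp [h0]
      omega
    · rw [ih (by omega) (by omega)]
      have : (List.filter (fun m => decide (m = i ∨ m = j)) [n]) = [] := by
        simp only [List.filter_cons, List.filter_nil, decide_eq_true_eq]
        rw [if_neg]; omega
      rw [this, List.append_nil]

lemma filter_range_pair (i j n : ℕ) (hij : i < j) (hjn : j < n) :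
    (List.range n).filter (fun m => decide (m = i ∨ m = j)) = [i, j] := by
  induction n with
  | zero => omega
  | succ n ih =>
    rw [List.range_succ, List.filter_append]
    by_cases h : j = n
    · rw [filter_range_single i j n (by omega) (by omega)]
      subst h
      simp
    · rw [ih (by omega)]
      have : (List.filter (fun m => decide (m = i ∨ m = j)) [n]) = [] := by
        simp only [List.filter_cons, List.filter_nil, decide_eq_true_eq]
        rw [if_neg]; omega
      rw [this, List.append_nil]

lemma filter_range_pair' (i j n : ℕ) (hij : i ≠ j) (hin : i < n) (hjn : j < n) :
    (List.range n).filter (fun m => decide (m = i ∨ m = j)) =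
      if i < j then [i, j] else [j, i] := by
  rcases lt_or_gt_of_ne hij with h | h
  · rw [if_pos h, filter_range_pair i j n h hjn]
  · rw [if_neg (by omega)]
    have : (fun m => decide (m = i ∨ m = j)) = (fun m => decide (m = j ∨ m = i)) := by
      funext m; exact decide_eq_decide.mpr or_comm
    rw [this, filter_range_pair j i n h hin]

lemma filter_perm {n : ℕ} [NeZero n] (G : ℕ → Fin n) (a b : Fin n) (pa pb : ℕ)
    (hpa : pa < n) (hpb : pb < n) (hpapb : pa ≠ pb) (hGa : G pa = a) (hGb : G pb = b)
    (hinj : ∀ i < n, ∀ j < n, G i = G j → i = j) :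
    ((List.range n).map G).filter (fun x => decide (x = a ∨ x = b)) =
      if pa < pb then [a, b] else [b, a] := by
  rw [List.filter_map,
    List.filter_congr (q := fun m => decide (m = pa ∨ m = pb))
      (fun m hm => by
        simp only [List.mem_range] at hm
        simp only [Function.comp_apply, decide_eq_decide]
        constructor
        · rintro (h | h)
          · exact Or.inl (hinj m hm pa hpa (h.trans hGa.symm))
          · exact Or.inr (hinj m hm pb hpb (h.trans hGb.symm))
        · rintro (rfl | rfl)
          · exact Or.inl hGa
          · exact Or.inr hGb),
    filter_range_pair' pa pb n hpapb hpa hpb]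
  split_ifs <;> simp [hGa, hGb]

end PathWordEvenAux

open Fin.NatCast

open PathWordEvenAux in
/-- For even `n ≥ 4`, the word `p₂p₃` with `p₂ = a₂a₁a₄a₃⋯a_{n−2}a_{n−3}a_n a_{n−1}` and
`p₃ = a_n a_{n−2}a_{n−1}a_{n−4}a_{n−3}⋯a₄a₅a₂a₃a₁` represents the path `P_n`
permutationally. Here `a_i` is the vertex `i - 1 : Fin n`. -/
theorem path_word_even (n : ℕ) [NeZero n] (hn : 4 ≤ n) (heven : Even n) :
    Represents
      ((((List.range ((n - 2) / 2)).flatMap fun k =>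
          [((2 * k + 1 : ℕ) : Fin n), ((2 * k : ℕ) : Fin n)]) ++
        [((n - 1 : ℕ) : Fin n), ((n - 2 : ℕ) : Fin n)]) ++
       (((n - 1 : ℕ) : Fin n) ::
        (((List.range ((n - 2) / 2)).flatMap fun k =>
          [((n - 3 - 2 * k : ℕ) : Fin n), ((n - 2 - 2 * k : ℕ) : Fin n)]) ++ [(0 : Fin n)])))
      (SimpleGraph.pathGraph n) := by
  have he : n % 2 = 0 := Nat.even_iff.mp heven
  set G₂ : ℕ → Fin n := fun m => ((gN m : ℕ) : Fin n) with hG₂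
  set G₃ : ℕ → Fin n := fun m => ((hN n m : ℕ) : Fin n) with hG₃
  have h2 : 2 * ((n - 2) / 2) = n - 2 := by omega
  have hrange : List.range n = (List.range (n - 2) ++ [n - 2]) ++ [n - 1] := by
    obtain ⟨m, rfl⟩ : ∃ m, n = m + 2 := ⟨n - 2, by omega⟩
    rw [show m + 2 - 2 = m by omega, show m + 2 - 1 = m + 1 by omega,
      show m + 2 = (m + 1) + 1 by omega, List.range_succ, List.range_succ]
  have hrange' : List.range n = 0 :: ((List.range (n - 2)).map Nat.succ ++ [n - 1]) := by
    obtain ⟨m, rfl⟩ : ∃ m, n = m + 2 := ⟨n - 2, by omega⟩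
    rw [show m + 2 - 2 = m by omega, show m + 2 - 1 = m + 1 by omega,
      show m + 2 = (m + 1) + 1 by omega, List.range_succ_eq_map, List.range_succ,
      List.map_append]
    rfl
  -- identify the two halves as maps over `range n`
  have hp₂ : (((List.range ((n - 2) / 2)).flatMap fun k =>
          [((2 * k + 1 : ℕ) : Fin n), ((2 * k : ℕ) : Fin n)]) ++
        [((n - 1 : ℕ) : Fin n), ((n - 2 : ℕ) : Fin n)]) = (List.range n).map G₂ := by
    have hu : ∀ k < (n - 2) / 2, ((2 * k + 1 : ℕ) : Fin n) = G₂ (2 * k) := by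
      intro k hk; simp only [hG₂]; congr 1; unfold gN; split_ifs <;> first | contradiction | omega
    have hv : ∀ k < (n - 2) / 2, ((2 * k : ℕ) : Fin n) = G₂ (2 * k + 1) := by
      intro k hk; simp only [hG₂]; congr 1; unfold gN; split_ifs <;> first | contradiction | omega
    have e1 : ((n - 1 : ℕ) : Fin n) = G₂ (n - 2) := by
      simp only [hG₂]; congr 1; unfold gN; split_ifs <;> first | contradiction | omega
    have e2 : ((n - 2 : ℕ) : Fin n) = G₂ (n - 1) := by
      simp only [hG₂]; congr 1; unfold gN; split_ifs <;> first | contradiction | omega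
    rw [flatMap_pairs _ _ G₂ _ hu hv, h2, hrange, List.map_append, List.map_append,
      e1, e2]
    simp
  have hp₃ : (((n - 1 : ℕ) : Fin n) ::
        (((List.range ((n - 2) / 2)).flatMap fun k =>
          [((n - 3 - 2 * k : ℕ) : Fin n), ((n - 2 - 2 * k : ℕ) : Fin n)]) ++ [(0 : Fin n)])) =
      (List.range n).map G₃ := by
    have hu : ∀ k < (n - 2) / 2, ((n - 3 - 2 * k : ℕ) : Fin n) = G₃ (2 * k + 1) := by
      intro k hk; simp only [hG₃]; congr 1; unfold hN; split_ifs <;> first | contradiction | omega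
    have hv : ∀ k < (n - 2) / 2, ((n - 2 - 2 * k : ℕ) : Fin n) = G₃ (2 * k + 1 + 1) := by
      intro k hk; simp only [hG₃]; congr 1; unfold hN; split_ifs <;> first | contradiction | omega
    have e0 : ((n - 1 : ℕ) : Fin n) = G₃ 0 := by
      simp [hG₃, hN]
    have e1 : (0 : Fin n) = G₃ (n - 1) := by
      have : hN n (n - 1) = 0 := by unfold hN; split_ifs <;> first | contradiction | omega
      simp [hG₃, this]
    have hfm : ((List.range ((n - 2) / 2)).flatMap fun k =>
          [((n - 3 - 2 * k : ℕ) : Fin n), ((n - 2 - 2 * k : ℕ) : Fin n)]) =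
        (List.range (n - 2)).map (fun j => G₃ (j + 1)) := by
      rw [flatMap_pairs _ _ (fun j => G₃ (j + 1)) _
        (fun k hk => by rw [hu k hk])
        (fun k hk => by rw [hv k hk]), h2]
    rw [hfm, hrange', List.map_cons, List.map_append, List.map_map, e0, e1]
    simp [Function.comp]
  rw [hp₂, hp₃]
  intro a b hab
  have hvab : a.val ≠ b.val := fun h => hab (Fin.val_injective h)
  -- injectivity facts
  have hinj₂ : ∀ i < n, ∀ j < n, G₂ i = G₂ j → i = j := by
    intro i hi j hj h
    have : gN i = gN j := by
      have := congrArg Fin.val h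
      rwa [hG₂, Fin.val_cast_of_lt (gN_lt he hi), Fin.val_cast_of_lt (gN_lt he hj)] at this
    have := congrArg gN this
    rwa [gN_gN, gN_gN] at this
  have hinj₃ : ∀ i < n, ∀ j < n, G₃ i = G₃ j → i = j := by
    intro i hi j hj h
    have : hN n i = hN n j := by
      have := congrArg Fin.val h
      rwa [hG₃, Fin.val_cast_of_lt (hN_lt hn hi), Fin.val_cast_of_lt (hN_lt hn hj)] at this
    have := congrArg (hN n) this
    rwa [hN_hN hn he hi, hN_hN hn he hj] at this
  have hG₂a : G₂ (gN a.val) = a := by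
    simp only [hG₂]
    rw [gN_gN, Fin.cast_val_eq_self]
  have hG₂b : G₂ (gN b.val) = b := by
    simp only [hG₂]
    rw [gN_gN, Fin.cast_val_eq_self]
  have hG₃a : G₃ (hN n a.val) = a := by
    simp only [hG₃]
    rw [hN_hN hn he a.isLt, Fin.cast_val_eq_self]
  have hG₃b : G₃ (hN n b.val) = b := by
    simp only [hG₃]
    rw [hN_hN hn he b.isLt, Fin.cast_val_eq_self]
  have hne₂ : gN a.val ≠ gN b.val := fun h => hvab (by
    have := congrArg gN h; rwa [gN_gN, gN_gN] at this)
  have hne₃ : hN n a.val ≠ hN n b.val := fun h => hvab (by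
    have := congrArg (hN n) h; rwa [hN_hN hn he a.isLt, hN_hN hn he b.isLt] at this)
  have halt : Alternates ((List.range n).map G₂ ++ (List.range n).map G₃) a b ↔
      (gN a.val < gN b.val ↔ hN n a.val < hN n b.val) := by
    unfold Alternates
    rw [List.filter_append,
      filter_perm G₂ a b _ _ (gN_lt he a.isLt) (gN_lt he b.isLt) hne₂ hG₂a hG₂b hinj₂,
      filter_perm G₃ a b _ _ (hN_lt hn a.isLt) (hN_lt hn b.isLt) hne₃ hG₃a hG₃b hinj₃]
    have hab' : b ≠ a := hab.symm
    split_ifs with h1 h2 h2 <;>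
      simp [List.Chain', List.isChain_cons_cons, hab, hab', h1, h2]
  rw [halt, SimpleGraph.pathGraph_adj]
  exact key n a.val b.val hn he a.isLt b.isLt hvab
end

section
/- For even n ≥ 6, the cycle C_n has permutation-representation number exactly 3. -/
namespace PrnCycle

variable {V : Type*} [DecidableEq V]

lemma filter_pair_of_not_mem (l : List V) {a b : V} (ha : a ∉ l) (hb : b ∉ l) :
    l.filter (fun x => decide (x = a ∨ x = b)) = [] := by
  rw [List.filter_eq_nil_iff]
  intro x hx
  simp only [decide_eq_true_eq]
  rintro (rfl | rfl)
  · exact ha hx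
  · exact hb hx

lemma filter_pair_single (l : List V) (hl : l.Nodup) {a b : V} (hb : b ∈ l) (ha : a ∉ l) :
    l.filter (fun x => decide (x = a ∨ x = b)) = [b] := by
  induction l with
  | nil => cases hb
  | cons c t ih =>
    obtain ⟨hct, ht⟩ := List.nodup_cons.mp hl
    have hat : a ∉ t := fun h => ha (List.mem_cons_of_mem _ h)
    by_cases hcb : c = b
    · have hbt : b ∉ t := hcb ▸ hct
      rw [List.filter_cons, if_pos (show (decide (c = a ∨ c = b)) = true by simp [hcb]),
        filter_pair_of_not_mem t hat hbt, hcb]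
    · have hbt : b ∈ t := (List.mem_cons.mp hb).resolve_left (fun h => hcb h.symm)
      have hca : ¬ c = a := fun h => ha (h ▸ List.mem_cons_self)
      rw [List.filter_cons, if_neg (show ¬ (decide (c = a ∨ c = b)) = true by simp [hca, hcb])]
      exact ih ht hbt hat

lemma filter_pair_of_lt (l : List V) (hl : l.Nodup) {a b : V} (hab : a ≠ b)
    (ha : a ∈ l) (hb : b ∈ l) (h : l.idxOf a < l.idxOf b) :
    l.filter (fun x => decide (x = a ∨ x = b)) = [a, b] := by
  induction l with
  | nil => cases ha
  | cons c t ih =>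
    obtain ⟨hct, ht⟩ := List.nodup_cons.mp hl
    by_cases hca : c = a
    · have hat : a ∉ t := hca ▸ hct
      have hbt : b ∈ t := (List.mem_cons.mp hb).resolve_left
        (fun h' => hab (hca ▸ h'.symm ▸ rfl : a = b))
      rw [List.filter_cons, if_pos (show (decide (c = a ∨ c = b)) = true by simp [hca]),
        filter_pair_single t ht hbt hat, hca]
    · by_cases hcb : c = b
      · exfalso
        have hb0 : (c :: t).idxOf b = 0 := by rw [hcb]; exact List.idxOf_cons_self
        omega
      · have hat : a ∈ t := (List.mem_cons.mp ha).resolve_left (fun h' => hca h'.symm)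
        have hbt : b ∈ t := (List.mem_cons.mp hb).resolve_left (fun h' => hcb h'.symm)
        have hia : (c :: t).idxOf a = t.idxOf a + 1 :=
          List.idxOf_cons_ne t hca
        have hib : (c :: t).idxOf b = t.idxOf b + 1 :=
          List.idxOf_cons_ne t hcb
        rw [List.filter_cons, if_neg (show ¬ (decide (c = a ∨ c = b)) = true by simp [hca, hcb])]
        exact ih ht hat hbt (by omega)

lemma pair_comm (a b : V) :
    (fun x => decide (x = a ∨ x = b)) = (fun x => decide (x = b ∨ x = a)) := by
  funext x; exact decide_eq_decide.mpr or_comm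

lemma perm_filter {p : List V} (hp : IsPermList p) {a b : V} (hab : a ≠ b) :
    (p.idxOf a < p.idxOf b ∧ p.filter (fun x => decide (x = a ∨ x = b)) = [a, b]) ∨
    (p.idxOf b < p.idxOf a ∧ p.filter (fun x => decide (x = a ∨ x = b)) = [b, a]) := by
  obtain ⟨hnd, hmem⟩ := hp
  have hne : p.idxOf a ≠ p.idxOf b :=
    fun h => hab ((List.idxOf_inj (hmem a)).mp h)
  rcases Nat.lt_or_ge (p.idxOf a) (p.idxOf b) with h | h
  · exact Or.inl ⟨h, filter_pair_of_lt p hnd hab (hmem a) (hmem b) h⟩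
  · have h' : p.idxOf b < p.idxOf a := by omega
    refine Or.inr ⟨h', ?_⟩
    rw [pair_comm]
    exact filter_pair_of_lt p hnd hab.symm (hmem b) (hmem a) h'

lemma alternates_one {p : List V} (hp : IsPermList p) {a b : V} (hab : a ≠ b) :
    Alternates (p ++ []) a b := by
  unfold Alternates
  rcases perm_filter hp hab with ⟨_, hf⟩ | ⟨_, hf⟩ <;>
    rw [List.append_nil, hf] <;> simp [List.Chain', List.isChain_cons_cons, hab, hab.symm]

lemma alternates_two {p q : List V} (hp : IsPermList p) (hq : IsPermList q)
    {a b : V} (hab : a ≠ b) :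
    Alternates (p ++ (q ++ [])) a b ↔
      ((p.idxOf a < p.idxOf b ∧ q.idxOf a < q.idxOf b) ∨
       (p.idxOf b < p.idxOf a ∧ q.idxOf b < q.idxOf a)) := by
  unfold Alternates
  rcases perm_filter hp hab with ⟨h1, hf1⟩ | ⟨h1, hf1⟩ <;>
    rcases perm_filter hq hab with ⟨h2, hf2⟩ | ⟨h2, hf2⟩ <;>
      rw [List.append_nil, List.filter_append, hf1, hf2] <;>
        simp [List.Chain', List.isChain_cons_cons, hab, hab.symm] <;> omega

lemma alternates_three {p q r : List V} (hp : IsPermList p) (hq : IsPermList q)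
    (hr : IsPermList r) {a b : V} (hab : a ≠ b) :
    Alternates (p ++ (q ++ (r ++ []))) a b ↔
      ((p.idxOf a < p.idxOf b ∧ q.idxOf a < q.idxOf b ∧ r.idxOf a < r.idxOf b) ∨
       (p.idxOf b < p.idxOf a ∧ q.idxOf b < q.idxOf a ∧ r.idxOf b < r.idxOf a)) := by
  unfold Alternates
  rcases perm_filter hp hab with ⟨h1, hf1⟩ | ⟨h1, hf1⟩ <;>
    rcases perm_filter hq hab with ⟨h2, hf2⟩ | ⟨h2, hf2⟩ <;>
      rcases perm_filter hr hab with ⟨h3, hf3⟩ | ⟨h3, hf3⟩ <;>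
        rw [List.append_nil, List.filter_append, List.filter_append, hf1, hf2, hf3] <;>
          simp [List.Chain', List.isChain_cons_cons, hab, hab.symm] <;> omega

/-! ### Adjacency in the cycle graph, in arithmetic form -/

lemma mod_two_mul {x n : ℕ} (h : x < 2 * n) : x % n = if x < n then x else x - n := by
  split_ifs with h'
  · exact Nat.mod_eq_of_lt h'
  · rw [Nat.mod_eq_sub_mod (le_of_not_gt h'), Nat.mod_eq_of_lt (by omega)]

/-- arithmetic adjacency relation for the cycle -/
def arel (n x y : ℕ) : Prop :=
  x + 1 = y ∨ y + 1 = x ∨ (x = 0 ∧ y = n - 1) ∨ (y = 0 ∧ x = n - 1)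

lemma adj_iff {n : ℕ} (hn : 6 ≤ n) (u v : Fin n) :
    (SimpleGraph.cycleGraph n).Adj u v ↔ arel n u.val v.val := by
  unfold arel
  have hu := u.isLt
  have hv := v.isLt
  rw [SimpleGraph.cycleGraph_adj']
  have h1 : (u - v).val = (n - v.val + u.val) % n := by rw [Fin.sub_def]
  have h2 : (v - u).val = (n - u.val + v.val) % n := by rw [Fin.sub_def]
  rw [h1, h2, mod_two_mul (by omega), mod_two_mul (by omega)]
  split_ifs <;> (try contradiction) <;> omega

/-! ### No representation with two permutations -/

section Lower

variable {n : ℕ} (hn : 6 ≤ n) (f g : Fin n → ℕ)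
  (hf : ∀ a b : Fin n, a ≠ b → f a ≠ f b) (hg : ∀ a b : Fin n, a ≠ b → g a ≠ g b)
  (H : ∀ a b : Fin n, a ≠ b → ((SimpleGraph.cycleGraph n).Adj a b ↔
    ((f a < f b ∧ g a < g b) ∨ (f b < f a ∧ g b < g a))))

include hn f g hf hg H in
lemma rule (x y v z : Fin n)
    (hxy : x ≠ y) (hxv : x ≠ v) (hyv : y ≠ v) (hzx : z ≠ x) (hzy : z ≠ y) (hzv : z ≠ v)
    (axv : (SimpleGraph.cycleGraph n).Adj x v) (ayv : (SimpleGraph.cycleGraph n).Adj y v)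
    (nxy : ¬ (SimpleGraph.cycleGraph n).Adj x y)
    (nzx : ¬ (SimpleGraph.cycleGraph n).Adj z x)
    (nzy : ¬ (SimpleGraph.cycleGraph n).Adj z y)
    (nzv : ¬ (SimpleGraph.cycleGraph n).Adj z v)
    (hlt : f z < f x) : f z < f y := by
  have Pxv := (H x v hxv).mp axv
  have Pyv := (H y v hyv).mp ayv
  have hNzv : ¬ ((f z < f v ∧ g z < g v) ∨ (f v < f z ∧ g v < g z)) :=
    fun h => nzv ((H z v hzv).mpr h)
  rcases Pxv with ⟨hx1, hx2⟩ | ⟨hx1, hx2⟩ <;> rcases Pyv with ⟨hy1, hy2⟩ | ⟨hy1, hy2⟩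
  · -- sink case : x < v, y < v in both
    rcases Nat.lt_or_ge (f z) (f v) with hzv1 | hzv1
    · have hgvz : g v < g z := by
        have := hg z v hzv
        rcases Nat.lt_or_ge (g z) (g v) with h' | h'
        · exact absurd (Or.inl ⟨hzv1, h'⟩) hNzv
        · omega
      by_contra hcon
      have hyz : f y < f z := by
        have := hf z y hzy
        omega
      exact nzy ((H z y hzy).mpr (Or.inr ⟨hyz, by omega⟩))
    · omega
  · -- mixed : x < v < y
    exact absurd ((H x y hxy).mpr (Or.inl ⟨by omega, by omega⟩)) nxy
  · -- mixed : y < v < x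
    exact absurd ((H x y hxy).mpr (Or.inr ⟨by omega, by omega⟩)) nxy
  · -- source case : v < x, v < y in both
    rcases Nat.lt_or_ge (f z) (f v) with hzv1 | hzv1
    · omega
    · have hfvz : f v < f z := by
        have := hf z v hzv
        omega
      have hgzv : g z < g v := by
        have := hg z v hzv
        rcases Nat.lt_or_ge (g v) (g z) with h' | h'
        · exact absurd (Or.inr ⟨hfvz, h'⟩) hNzv
        · omega
      exact absurd ((H z x hzx).mpr (Or.inl ⟨hlt, by omega⟩)) nzx

include hn hf hg H in
lemma no_two_core (A : Fin n) (mB mC mV1 mV2 : ℕ)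
    (bB : mB < n) (bC : mC < n) (bV1 : mV1 < n) (bV2 : mV2 < n)
    (maxA : ∀ w : Fin n, f w ≤ f A)
    (neAB : A.val ≠ mB) (neAC : A.val ≠ mC) (neBC : mB ≠ mC)
    (neAV1 : A.val ≠ mV1) (neCV1 : mC ≠ mV1) (neBV1 : mB ≠ mV1)
    (neAV2 : A.val ≠ mV2) (neBV2 : mB ≠ mV2) (neCV2 : mC ≠ mV2)
    (aAV1 : arel n A.val mV1) (aCV1 : arel n mC mV1)
    (aAV2 : arel n A.val mV2) (aBV2 : arel n mB mV2)
    (nAB : ¬ arel n A.val mB) (nAC : ¬ arel n A.val mC) (nBC : ¬ arel n mB mC)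
    (nBV1 : ¬ arel n mB mV1) (nCV2 : ¬ arel n mC mV2) : False := by
  set B : Fin n := ⟨mB, bB⟩ with hB
  set C : Fin n := ⟨mC, bC⟩ with hC
  set V1 : Fin n := ⟨mV1, bV1⟩ with hV1
  set V2 : Fin n := ⟨mV2, bV2⟩ with hV2
  have hAB : A ≠ B := fun h => neAB (congrArg Fin.val h)
  have hAC : A ≠ C := fun h => neAC (congrArg Fin.val h)
  have hBC : B ≠ C := fun h => neBC (congrArg Fin.val h)
  have hAV1 : A ≠ V1 := fun h => neAV1 (congrArg Fin.val h)
  have hCV1 : C ≠ V1 := fun h => neCV1 (congrArg Fin.val h)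
  have hBV1 : B ≠ V1 := fun h => neBV1 (congrArg Fin.val h)
  have hAV2 : A ≠ V2 := fun h => neAV2 (congrArg Fin.val h)
  have hBV2 : B ≠ V2 := fun h => neBV2 (congrArg Fin.val h)
  have hCV2 : C ≠ V2 := fun h => neCV2 (congrArg Fin.val h)
  have aAV1' : (SimpleGraph.cycleGraph n).Adj A V1 := (adj_iff hn A V1).mpr aAV1
  have aCV1' : (SimpleGraph.cycleGraph n).Adj C V1 := (adj_iff hn C V1).mpr aCV1
  have aAV2' : (SimpleGraph.cycleGraph n).Adj A V2 := (adj_iff hn A V2).mpr aAV2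
  have aBV2' : (SimpleGraph.cycleGraph n).Adj B V2 := (adj_iff hn B V2).mpr aBV2
  have nAB' : ¬ (SimpleGraph.cycleGraph n).Adj A B := fun h => nAB ((adj_iff hn A B).mp h)
  have nAC' : ¬ (SimpleGraph.cycleGraph n).Adj A C := fun h => nAC ((adj_iff hn A C).mp h)
  have nBC' : ¬ (SimpleGraph.cycleGraph n).Adj B C := fun h => nBC ((adj_iff hn B C).mp h)
  have nBV1' : ¬ (SimpleGraph.cycleGraph n).Adj B V1 := fun h => nBV1 ((adj_iff hn B V1).mp h)
  have nCV2' : ¬ (SimpleGraph.cycleGraph n).Adj C V2 := fun h => nCV2 ((adj_iff hn C V2).mp h)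
  have hBA : f B < f A := by have := hf B A hAB.symm; have := maxA B; omega
  have hCA : f C < f A := by have := hf C A hAC.symm; have := maxA C; omega
  have h1 : f B < f C :=
    rule hn f g hf hg H A C V1 B hAC hAV1 hCV1 hAB.symm hBC hBV1
      aAV1' aCV1' nAC' (fun h => nAB' h.symm) nBC' nBV1' hBA
  have h2 : f C < f B :=
    rule hn f g hf hg H A B V2 C hAB hAV2 hBV2 hAC.symm (Ne.symm hBC) hCV2
      aAV2' aBV2' nAB' (fun h => nAC' h.symm) (fun h => nBC' h.symm) nCV2' hCA
  omega

include hn hf hg H in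
lemma no_two : False := by
  have : Nonempty (Fin n) := ⟨⟨0, by omega⟩⟩
  obtain ⟨A, maxA⟩ := Finite.exists_max f
  have hA : A.val < n := A.isLt
  have hcases : (2 ≤ A.val ∧ A.val + 2 < n) ∨ A.val = 0 ∨ A.val = 1 ∨
      A.val = n - 2 ∨ A.val = n - 1 := by omega
  rcases hcases with ⟨h1, h2⟩ | h | h | h | h
  · exact no_two_core hn f g hf hg H A (A.val + 2) (A.val - 2) (A.val - 1) (A.val + 1)
      (by omega) (by omega) (by omega) (by omega) maxA
      (by omega) (by omega) (by omega) (by omega) (by omega) (by omega)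
      (by omega) (by omega) (by omega)
      (by unfold arel; omega) (by unfold arel; omega) (by unfold arel; omega)
      (by unfold arel; omega)
      (by unfold arel; omega) (by unfold arel; omega) (by unfold arel; omega)
      (by unfold arel; omega) (by unfold arel; omega)
  · exact no_two_core hn f g hf hg H A 2 (n - 2) (n - 1) 1
      (by omega) (by omega) (by omega) (by omega) maxA
      (by omega) (by omega) (by omega) (by omega) (by omega) (by omega)
      (by omega) (by omega) (by omega)
      (by unfold arel; omega) (by unfold arel; omega) (by unfold arel; omega)
      (by unfold arel; omega)
      (by unfold arel; omega) (by unfold arel; omega) (by unfold arel; omega)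
      (by unfold arel; omega) (by unfold arel; omega)
  · exact no_two_core hn f g hf hg H A 3 (n - 1) 0 2
      (by omega) (by omega) (by omega) (by omega) maxA
      (by omega) (by omega) (by omega) (by omega) (by omega) (by omega)
      (by omega) (by omega) (by omega)
      (by unfold arel; omega) (by unfold arel; omega) (by unfold arel; omega)
      (by unfold arel; omega)
      (by unfold arel; omega) (by unfold arel; omega) (by unfold arel; omega)
      (by unfold arel; omega) (by unfold arel; omega)
  · exact no_two_core hn f g hf hg H A 0 (n - 4) (n - 3) (n - 1)
      (by omega) (by omega) (by omega) (by omega) maxA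
      (by omega) (by omega) (by omega) (by omega) (by omega) (by omega)
      (by omega) (by omega) (by omega)
      (by unfold arel; omega) (by unfold arel; omega) (by unfold arel; omega)
      (by unfold arel; omega)
      (by unfold arel; omega) (by unfold arel; omega) (by unfold arel; omega)
      (by unfold arel; omega) (by unfold arel; omega)
  · exact no_two_core hn f g hf hg H A 1 (n - 3) (n - 2) 0
      (by omega) (by omega) (by omega) (by omega) maxA
      (by omega) (by omega) (by omega) (by omega) (by omega) (by omega)
      (by omega) (by omega) (by omega)
      (by unfold arel; omega) (by unfold arel; omega) (by unfold arel; omega)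
      (by unfold arel; omega)
      (by unfold arel; omega) (by unfold arel; omega) (by unfold arel; omega)
      (by unfold arel; omega) (by unfold arel; omega)

end Lower

/-! ### The three permutations -/

def posA (n m : ℕ) : ℕ :=
  if m = 0 then 0 else if m = n - 2 then 1 else if m = n - 1 then 2
  else if m % 2 = 0 then m / 2 + 2 else n - 1 - (m - 1) / 2

def posB (n m : ℕ) : ℕ :=
  if m = 0 then 0 else if m = n - 1 then n - 1 else if m % 2 = 0 then m - 1 else m + 1

def posC (n m : ℕ) : ℕ :=
  if m = n - 2 then 0 else if m = n - 1 then n - 1 else if m % 2 = 0 then n - 3 - m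
  else n - 1 - m

def vtxA (n p : ℕ) : ℕ :=
  if p = 0 then 0 else if p = 1 then n - 2 else if p = 2 then n - 1
  else if p ≤ n / 2 then 2 * (p - 2) else 2 * (n - 1 - p) + 1

def vtxB (n p : ℕ) : ℕ :=
  if p = 0 then 0 else if p = n - 1 then n - 1 else if p % 2 = 1 then p + 1 else p - 1

def vtxC (n p : ℕ) : ℕ :=
  if p = 0 then n - 2 else if p = n - 1 then n - 1 else if p % 2 = 1 then n - 3 - p
  else n - 1 - p

section Upper

variable {n : ℕ} (hn : 6 ≤ n) (he : n % 2 = 0)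

include hn he

lemma posA_lt {m : ℕ} (hm : m < n) : posA n m < n := by
  unfold posA; split_ifs <;> (try contradiction) <;> omega

lemma posB_lt {m : ℕ} (hm : m < n) : posB n m < n := by
  unfold posB; split_ifs <;> (try contradiction) <;> omega

lemma posC_lt {m : ℕ} (hm : m < n) : posC n m < n := by
  unfold posC; split_ifs <;> (try contradiction) <;> omega

lemma vtxA_lt {p : ℕ} (hp : p < n) : vtxA n p < n := by
  unfold vtxA; split_ifs <;> (try contradiction) <;> omega

lemma vtxB_lt {p : ℕ} (hp : p < n) : vtxB n p < n := by
  unfold vtxB; split_ifs <;> (try contradiction) <;> omega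

lemma vtxC_lt {p : ℕ} (hp : p < n) : vtxC n p < n := by
  unfold vtxC; split_ifs <;> (try contradiction) <;> omega

lemma vtxA_posA {m : ℕ} (hm : m < n) : vtxA n (posA n m) = m := by
  unfold posA vtxA; split_ifs <;> (try contradiction) <;> omega

lemma vtxB_posB {m : ℕ} (hm : m < n) : vtxB n (posB n m) = m := by
  unfold posB vtxB; split_ifs <;> (try contradiction) <;> omega

lemma vtxC_posC {m : ℕ} (hm : m < n) : vtxC n (posC n m) = m := by
  unfold posC vtxC; split_ifs <;> (try contradiction) <;> omega

set_option maxHeartbeats 2000000 in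
lemma grand {a b : ℕ} (ha : a < n) (hb : b < n) (hab : a ≠ b) :
    (a + 1 = b ∨ b + 1 = a ∨ (a = 0 ∧ b = n - 1) ∨ (b = 0 ∧ a = n - 1)) ↔
      ((posA n a < posA n b ∧ posB n a < posB n b ∧ posC n a < posC n b) ∨
       (posA n b < posA n a ∧ posB n b < posB n a ∧ posC n b < posC n a)) := by
  unfold posA posB posC
  split_ifs <;> (try contradiction) <;> omega

end Upper

section Perms

variable {n : ℕ} (hn : 6 ≤ n) (he : n % 2 = 0)

/-- vertex-at-position functions as `Fin n → Fin n` -/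
def FA (hn : 6 ≤ n) (he : n % 2 = 0) : Fin n → Fin n :=
  fun p => ⟨vtxA n p.val, vtxA_lt hn he p.isLt⟩

def FB (hn : 6 ≤ n) (he : n % 2 = 0) : Fin n → Fin n :=
  fun p => ⟨vtxB n p.val, vtxB_lt hn he p.isLt⟩

def FC (hn : 6 ≤ n) (he : n % 2 = 0) : Fin n → Fin n :=
  fun p => ⟨vtxC n p.val, vtxC_lt hn he p.isLt⟩

lemma FA_surj : Function.Surjective (FA hn he) := by
  intro a
  refine ⟨⟨posA n a.val, posA_lt hn he a.isLt⟩, ?_⟩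
  simp [FA, vtxA_posA hn he a.isLt, Fin.ext_iff]

lemma FB_surj : Function.Surjective (FB hn he) := by
  intro a
  refine ⟨⟨posB n a.val, posB_lt hn he a.isLt⟩, ?_⟩
  simp [FB, vtxB_posB hn he a.isLt, Fin.ext_iff]

lemma FC_surj : Function.Surjective (FC hn he) := by
  intro a
  refine ⟨⟨posC n a.val, posC_lt hn he a.isLt⟩, ?_⟩
  simp [FC, vtxC_posC hn he a.isLt, Fin.ext_iff]

lemma indexOf_ofFn {F : Fin n → Fin n} (hF : Function.Injective F) (i : Fin n) :
    (List.ofFn F).idxOf (F i) = i.val := by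
  have hlen : (List.ofFn F).length = n := List.length_ofFn
  have hget : (List.ofFn F).get ⟨i.val, by omega⟩ = F i := by
    rw [List.get_ofFn]
    rfl
  have hnd : (List.ofFn F).Nodup := List.nodup_ofFn.mpr hF
  have := List.get_idxOf hnd ⟨i.val, by omega⟩
  rw [hget] at this
  rw [this]

lemma permlist_ofFn {F : Fin n → Fin n} (hF : Function.Surjective F) :
    IsPermList (List.ofFn F) := by
  have hInj : Function.Injective F := Finite.injective_iff_surjective.mpr hF
  exact ⟨List.nodup_ofFn.mpr hInj, fun x => List.mem_ofFn.mpr (hF x)⟩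

lemma indexOf_eq_pos {F : Fin n → Fin n} (hF : Function.Surjective F)
    (pos : ℕ → ℕ) (hpos : ∀ m, m < n → pos m < n)
    (hFpos : ∀ a : Fin n, F ⟨pos a.val, hpos a.val a.isLt⟩ = a) (a : Fin n) :
    (List.ofFn F).idxOf a = pos a.val := by
  have hInj : Function.Injective F := Finite.injective_iff_surjective.mpr hF
  conv_lhs => rw [← hFpos a]
  exact indexOf_ofFn hInj ⟨pos a.val, hpos a.val a.isLt⟩

end Perms

end PrnCycle

open PrnCycle in
/-- For even `n ≥ 6`, the cycle `C_n` has permutation-representation number exactly 3. -/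
theorem prn_cycleGraph (n : ℕ) (hn : 6 ≤ n) (heven : Even n) :
    prn (SimpleGraph.cycleGraph n) = 3 := by
  have he : n % 2 = 0 := Nat.even_iff.mp heven
  set S : Set ℕ := {k | 0 < k ∧ ∃ ps : List (List (Fin n)), ps.length = k ∧
    (∀ p ∈ ps, IsPermList p) ∧ Represents ps.flatten (SimpleGraph.cycleGraph n)} with hS
  -- upper bound : 3 ∈ S
  have h3 : 3 ∈ S := by
    refine ⟨by norm_num, [List.ofFn (FA hn he), List.ofFn (FB hn he), List.ofFn (FC hn he)],
      rfl, ?_, ?_⟩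
    · intro p hp
      simp only [List.mem_cons, List.not_mem_nil, or_false] at hp
      rcases hp with rfl | rfl | rfl
      · exact permlist_ofFn (FA_surj hn he)
      · exact permlist_ofFn (FB_surj hn he)
      · exact permlist_ofFn (FC_surj hn he)
    · intro a b hab
      have hIA := indexOf_eq_pos (n := n) (FA_surj hn he) (posA n)
        (fun m hm => posA_lt hn he hm) (fun a => by
          simp [FA, Fin.ext_iff, vtxA_posA hn he a.isLt])
      have hIB := indexOf_eq_pos (n := n) (FB_surj hn he) (posB n)
        (fun m hm => posB_lt hn he hm) (fun a => by
          simp [FB, Fin.ext_iff, vtxB_posB hn he a.isLt])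
      have hIC := indexOf_eq_pos (n := n) (FC_surj hn he) (posC n)
        (fun m hm => posC_lt hn he hm) (fun a => by
          simp [FC, Fin.ext_iff, vtxC_posC hn he a.isLt])
      have hflat : ([List.ofFn (FA hn he), List.ofFn (FB hn he),
          List.ofFn (FC hn he)] : List (List (Fin n))).flatten =
          List.ofFn (FA hn he) ++ (List.ofFn (FB hn he) ++ (List.ofFn (FC hn he) ++ [])) := by
        simp [List.flatten]
      rw [hflat, alternates_three (permlist_ofFn (FA_surj hn he))
        (permlist_ofFn (FB_surj hn he)) (permlist_ofFn (FC_surj hn he)) hab,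
        hIA, hIB, hIC, hIA, hIB, hIC, adj_iff hn]
      unfold arel
      have hvab : a.val ≠ b.val := fun h => hab (Fin.ext h)
      exact grand hn he a.isLt b.isLt hvab
  -- lower bound : every element of S is ≥ 3
  have hlow : ∀ m ∈ S, 3 ≤ m := by
    rintro m ⟨hm0, ps, hlen, hperm, hrep⟩
    by_contra hcon
    interval_cases m
    · -- one permutation
      obtain ⟨p, rfl⟩ := List.length_eq_one_iff.mp hlen
      have hp : IsPermList p := hperm p (List.mem_singleton_self p)
      have hflat : ([p] : List (List (Fin n))).flatten = p ++ [] := by simp [List.flatten]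
      rw [hflat] at hrep
      have h02 : ((⟨0, by omega⟩ : Fin n) : Fin n) ≠ ⟨2, by omega⟩ := by
        simp [Fin.ext_iff]
      have := (hrep _ _ h02).mpr (alternates_one hp h02)
      rw [adj_iff hn] at this
      exact absurd this (show ¬ arel n 0 2 from by unfold arel; omega)
    · -- two permutations
      obtain ⟨p, q, rfl⟩ := List.length_eq_two.mp hlen
      have hp : IsPermList p := hperm p (by simp)
      have hq : IsPermList q := hperm q (by simp)
      have hflat : ([p, q] : List (List (Fin n))).flatten = p ++ (q ++ []) := by
        simp [List.flatten]
      rw [hflat] at hrep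
      refine no_two hn (fun v => p.idxOf v) (fun v => q.idxOf v) ?_ ?_ ?_
      · intro a b hab h
        exact hab ((List.idxOf_inj (hp.2 a)).mp h)
      · intro a b hab h
        exact hab ((List.idxOf_inj (hq.2 a)).mp h)
      · intro a b hab
        rw [hrep a b hab, alternates_two hp hq hab]
  have hne : S.Nonempty := ⟨3, h3⟩
  exact le_antisymm (Nat.sInf_le h3) (le_csInf hne hlow)
end

section
/- In any word p₁⋯p_k of permutations representing a bipartite graph G = (A ∪ B, E) permutationally, for each vertex a ∈ A and each permutation p_i: if some neighbor of a appears to the right of a in p_i, then every neighbor of a appears to the right of a in p_i (and symmetrically for the left side). -/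
set_option linter.unusedSectionVars false

section Aux

variable {V : Type*} [DecidableEq V]

lemma pair_list_cases {l : List V} {x y : V} (hnd : l.Nodup) (hxy : x ≠ y)
    (hxl : x ∈ l) (hyl : y ∈ l) (hmem : ∀ z ∈ l, z = x ∨ z = y) :
    l = [x, y] ∨ l = [y, x] := by
  match l, hnd, hxl, hyl, hmem with
  | [x'], _, hxl, hyl, _ => simp_all
  | (c :: d :: t), hnd', hxl, hyl, hmem =>
    have hc : c = x ∨ c = y := hmem c (by simp)
    have hd : d = x ∨ d = y := hmem d (by simp)
    have hcd : c ≠ d := by simp [List.nodup_cons] at hnd'; tauto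
    have ht : t = [] := by
      cases t with
      | nil => rfl
      | cons e t' =>
        exfalso
        have he : e = x ∨ e = y := hmem e (by simp)
        simp [List.nodup_cons] at hnd'
        rcases hc with rfl | rfl <;> rcases hd with rfl | rfl <;>
          rcases he with rfl | rfl <;> tauto
    subst ht
    rcases hc with rfl | rfl <;> rcases hd with rfl | rfl <;> simp_all

lemma filter_pair_cases {p : List V} (hnd : p.Nodup) {x y : V} (hxy : x ≠ y)
    (hx : x ∈ p) (hy : y ∈ p) :
    p.filter (fun z => decide (z = x ∨ z = y)) = [x, y] ∨
    p.filter (fun z => decide (z = x ∨ z = y)) = [y, x] := by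
  apply pair_list_cases (hnd.filter _) hxy
  · simp [List.mem_filter, hx]
  · simp [List.mem_filter, hy]
  · intro z hz
    have := (List.mem_filter.1 hz).2
    simpa using this

lemma precedes_of_filter_eq {p : List V} {x y : V} (hxy : x ≠ y)
    (h : p.filter (fun z => decide (z = x ∨ z = y)) = [x, y]) :
    p.idxOf x < p.idxOf y := by
  induction p with
  | nil => simp at h
  | cons c t ih =>
    by_cases hcx : c = x
    · subst hcx
      rw [List.idxOf_cons_self, List.idxOf_cons_ne _ hxy]
      exact Nat.succ_pos _
    · by_cases hcy : c = y
      · subst hcy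
        rw [List.filter_cons_of_pos (by simp)] at h
        simp at h
        exact absurd h.1.symm hxy
      · rw [List.filter_cons_of_neg (by simp [hcx, hcy])] at h
        rw [List.idxOf_cons_ne _ hcx, List.idxOf_cons_ne _ hcy]
        exact Nat.succ_lt_succ (ih h)

lemma filter_eq_iff_precedes {p : List V} (hnd : p.Nodup) {x y : V} (hxy : x ≠ y)
    (hx : x ∈ p) (hy : y ∈ p) :
    p.filter (fun z => decide (z = x ∨ z = y)) = [x, y] ↔ p.idxOf x < p.idxOf y := by
  constructor
  · exact precedes_of_filter_eq hxy
  · intro hlt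
    rcases filter_pair_cases hnd hxy hx hy with h | h
    · exact h
    · have : p.filter (fun z => decide (z = y ∨ z = x)) = [y, x] := by
        rw [← h]; congr 1; funext z; simp [or_comm]
      have := precedes_of_filter_eq (Ne.symm hxy) this
      omega

lemma filter_flatten' (f : V → Bool) (L : List (List V)) :
    L.flatten.filter f = (L.map (List.filter f)).flatten := by
  induction L with
  | nil => simp
  | cons h t ih => simp [List.filter_append, ih]

lemma blocks_dichotomy {x y : V} :
    ∀ (bs : List (List V)), (∀ b ∈ bs, b = [x, y] ∨ b = [y, x]) →
    bs.flatten.Chain' (· ≠ ·) →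
    (∀ b ∈ bs, b = [x, y]) ∨ ∀ b ∈ bs, b = [y, x] := by
  intro bs
  induction bs with
  | nil => intro _ _; left; simp
  | cons hd t ih =>
    intro hall hch
    rw [List.flatten_cons] at hch
    unfold List.Chain' at hch
    rw [List.isChain_append] at hch
    obtain ⟨-, hcht, hne⟩ := hch
    have h1 := ih (fun b hb => hall b (List.mem_cons_of_mem _ hb)) hcht
    have hfl : ∀ (c0 : V) (t0 : List V) (t' : List (List V)), t = (c0 :: t0) :: t' →
        t.flatten.head? = some c0 := by
      intro c0 t0 t' h
      simp [h]
    rcases h1 with h1 | h1 <;> rcases hall hd (by simp) with rfl | rfl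
    · left
      intro b hb
      rcases List.mem_cons.1 hb with rfl | hb
      · rfl
      · exact h1 b hb
    · cases t with
      | nil => right; intro b hb; simpa using hb
      | cons c0 t' =>
        exfalso
        have hc0 : c0 = [x, y] := h1 c0 (by simp)
        subst hc0
        exact hne x (by simp) x (hfl x [y] t' rfl ▸ rfl) rfl
    · cases t with
      | nil => left; intro b hb; simpa using hb
      | cons c0 t' =>
        exfalso
        have hc0 : c0 = [y, x] := h1 c0 (by simp)
        subst hc0
        exact hne y (by simp) y (hfl y [x] t' rfl ▸ rfl) rfl
    · right
      intro b hb
      rcases List.mem_cons.1 hb with rfl | hb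
      · rfl
      · exact h1 b hb

lemma chain'_of_blocks_const {x y : V} (hxy : x ≠ y) :
    ∀ (bs : List (List V)), (∀ b ∈ bs, b = [x, y]) →
    bs.flatten.Chain' (· ≠ ·) := by
  intro bs
  induction bs with
  | nil => intro _; simp [List.Chain']
  | cons hd t ih =>
    intro hall
    rw [List.flatten_cons]
    unfold List.Chain'
    rw [List.isChain_append]
    have hhd : hd = [x, y] := hall hd (by simp)
    subst hhd
    refine ⟨by simp [hxy], ih (fun b hb => hall b (by simp [hb])), ?_⟩
    intro u hu v hv
    simp at hu
    subst hu
    cases t with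
    | nil => simp at hv
    | cons c0 t' =>
      have : c0 = [x, y] := hall c0 (by simp)
      subst this
      simp at hv
      subst hv
      exact Ne.symm hxy

lemma precedes_total {p : List V} (h : IsPermList p) {x y : V} (hxy : x ≠ y) :
    Precedes p x y ∨ Precedes p y x := by
  have hne : p.idxOf x ≠ p.idxOf y :=
    fun heq => hxy ((List.idxOf_inj (h.2 x)).1 heq)
  unfold Precedes
  omega

/-- If `x` and `y` are adjacent, their relative order is the same in every
constituent permutation. -/
lemma order_const {G : SimpleGraph V} {ps : List (List V)}
    (hps : ∀ p ∈ ps, IsPermList p) (hrep : Represents ps.flatten G)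
    {x y : V} (hadj : G.Adj x y) {p q : List V} (hp : p ∈ ps) (hq : q ∈ ps)
    (h : Precedes p x y) : Precedes q x y := by
  have hxy : x ≠ y := hadj.ne
  have halt : Alternates ps.flatten x y := (hrep x y hxy).1 hadj
  unfold Alternates at halt
  rw [filter_flatten'] at halt
  have hblocks : ∀ b ∈ ps.map (List.filter (fun z => decide (z = x ∨ z = y))),
      b = [x, y] ∨ b = [y, x] := by
    intro b hb
    obtain ⟨r, hr, rfl⟩ := List.mem_map.1 hb
    exact filter_pair_cases (hps r hr).1 hxy ((hps r hr).2 x) ((hps r hr).2 y)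
  have hdich := blocks_dichotomy _ hblocks halt
  have hpblk : p.filter (fun z => decide (z = x ∨ z = y)) = [x, y] :=
    (filter_eq_iff_precedes (hps p hp).1 hxy ((hps p hp).2 x) ((hps p hp).2 y)).2 h
  rcases hdich with hall | hall
  · have := hall (q.filter (fun z => decide (z = x ∨ z = y)))
      (List.mem_map.2 ⟨q, hq, rfl⟩)
    exact (filter_eq_iff_precedes (hps q hq).1 hxy ((hps q hq).2 x) ((hps q hq).2 y)).1 this
  · exfalso
    have := hall (p.filter (fun z => decide (z = x ∨ z = y)))
      (List.mem_map.2 ⟨p, hp, rfl⟩)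
    rw [hpblk] at this
    simp at this
    exact hxy this.1

/-- If `x` precedes `y` in every constituent permutation, then `x` and `y`
are adjacent. -/
lemma adj_of_all_precedes {G : SimpleGraph V} {ps : List (List V)}
    (hps : ∀ p ∈ ps, IsPermList p) (hrep : Represents ps.flatten G)
    {x y : V} (hxy : x ≠ y) (h : ∀ q ∈ ps, Precedes q x y) : G.Adj x y := by
  rw [hrep x y hxy]
  unfold Alternates
  rw [filter_flatten']
  apply chain'_of_blocks_const hxy
  intro b hb
  obtain ⟨r, hr, rfl⟩ := List.mem_map.1 hb
  exact (filter_eq_iff_precedes (hps r hr).1 hxy ((hps r hr).2 x) ((hps r hr).2 y)).2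
    (h r hr)

end Aux

/-- In any concatenation of permutations representing a bipartite graph `G = (A ∪ B, E)`
permutationally, for each vertex `a ∈ A` and each constituent permutation `p`: if some
neighbor of `a` appears to the right of `a` in `p`, then every neighbor of `a` appears
to the right of `a` in `p`; and symmetrically for the left side. -/
theorem neighbors_same_side {V : Type*} [DecidableEq V] (G : SimpleGraph V)
    (A B : Set V) (hcover : A ∪ B = Set.univ) (hdisj : Disjoint A B)
    (hbip : ∀ a b : V, G.Adj a b → (a ∈ A ↔ b ∈ B))
    (ps : List (List V)) (hps : ∀ p ∈ ps, IsPermList p)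
    (hrep : Represents ps.flatten G)
    (a : V) (ha : a ∈ A) (p : List V) (hp : p ∈ ps) :
    ((∃ b : V, G.Adj a b ∧ Precedes p a b) → ∀ b : V, G.Adj a b → Precedes p a b) ∧
    ((∃ b : V, G.Adj a b ∧ Precedes p b a) → ∀ b : V, G.Adj a b → Precedes p b a) := by
  have hnonadj : ∀ b c : V, G.Adj a b → G.Adj a c → ¬G.Adj b c := by
    intro b c hab hac hbc
    have hb : b ∈ B := (hbip a b hab).1 ha
    have hc : c ∈ B := (hbip a c hac).1 ha
    have hbA : b ∈ A := (hbip b c hbc).2 hc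
    exact Set.disjoint_left.1 hdisj hbA hb
  have H1 : (∃ b : V, G.Adj a b ∧ Precedes p a b) → ∀ c : V, G.Adj a c → Precedes p a c := by
    rintro ⟨b, hab, hpab⟩ c hac
    by_cases hbc : b = c
    · exact hbc ▸ hpab
    by_contra hn
    have hpca : Precedes p c a := by
      rcases precedes_total (hps p hp) hac.ne with h | h
      · exact absurd h hn
      · exact h
    have hq : ∀ q ∈ ps, Precedes q c b := by
      intro q hq
      have h1 : Precedes q a b := order_const hps hrep hab hp hq hpab
      have h2 : Precedes q c a := order_const hps hrep hac.symm hp hq hpca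
      exact Nat.lt_trans h2 h1
    have hadjcb : G.Adj c b :=
      adj_of_all_precedes hps hrep (fun h => hbc h.symm) hq
    exact hnonadj b c hab hac hadjcb.symm
  refine ⟨H1, ?_⟩
  rintro ⟨b, hab, hpba⟩ c hac
  by_contra hn
  have hpac : Precedes p a c := by
    rcases precedes_total (hps p hp) hac.ne with h | h
    · exact h
    · exact absurd h hn
  have := H1 ⟨c, hac, hpac⟩ b hab
  exact absurd hpba (Nat.lt_asymm this)
end

section
/- The word obtained by concatenating p₁ = 1 2 ⋯ m 0, p₂ = m (m−1) ⋯ 2 1 0, and p₃ = 1 2 ⋯ m 0 represents the star graph K_{1,m} (center 0, leaves 1,…,m) permutationally. -/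
/-- The star graph `K_{1,m}` with center `0` and leaves `1, …, m`, on `Fin (m+1)`. -/
def starGraph (m : ℕ) : SimpleGraph (Fin (m + 1)) :=
  SimpleGraph.fromRel fun a _ => a = 0

open Fin.NatCast

lemma filter_range_none {m : ℕ} (p : ℕ → Bool) (hp : ∀ k < m, p k = false) :
    (List.range m).filter p = [] := by
  apply List.filter_eq_nil_iff.mpr
  intro k hk
  simp [hp k (List.mem_range.mp hk)]

lemma filter_range_one {m i : ℕ} (hi : i < m) (p : ℕ → Bool)
    (hp : ∀ k < m, p k = decide (k = i)) :
    (List.range m).filter p = [i] := by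
  induction m with
  | zero => omega
  | succ n ih =>
    rw [List.range_succ, List.filter_append]
    by_cases h : i = n
    · rw [filter_range_none p (fun k hk => by rw [hp k (by omega)]; simp; omega)]
      have hn : p n = true := by rw [hp n (by omega)]; simp [h]
      simp [hn, h]
    · rw [ih (by omega) (fun k hk => hp k (by omega))]
      have hn : p n = false := by rw [hp n (by omega)]; simp; omega
      simp [hn]

lemma filter_range_two {m i j : ℕ} (hij : i < j) (hj : j < m) (p : ℕ → Bool)
    (hp : ∀ k < m, p k = (decide (k = i) || decide (k = j))) :
    (List.range m).filter p = [i, j] := by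
  induction m with
  | zero => omega
  | succ n ih =>
    rw [List.range_succ, List.filter_append]
    by_cases h : j = n
    · rw [filter_range_one (m := n) (i := i) (by omega) p (fun k hk => by
        have hkj : (decide (k = j)) = false := by simp; omega
        rw [hp k (by omega), hkj, Bool.or_false])]
      have hn : p n = true := by rw [hp n (by omega)]; simp [h]
      simp [hn, h]
    · rw [ih (by omega) (fun k hk => hp k (by omega))]
      have hn : p n = false := by rw [hp n (by omega)]; simp; omega
      simp [hn]

lemma alternates_comm {V : Type*} [DecidableEq V] (w : List V) (a b : V) :
    Alternates w a b ↔ Alternates w b a := by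
  unfold Alternates
  have h : (fun x : V => decide (x = a ∨ x = b)) = fun x : V => decide (x = b ∨ x = a) := by
    funext x
    rw [decide_eq_decide]
    exact or_comm
  rw [h]

lemma fin_cast_eq_iff {m : ℕ} (k : ℕ) (hk : k < m + 1) (a : Fin (m + 1)) :
    ((k : ℕ) : Fin (m + 1)) = a ↔ k = a.val := by
  rw [Fin.ext_iff, Fin.val_natCast, Nat.mod_eq_of_lt hk]

section Main

variable {m : ℕ}

lemma filter_word (p : Fin (m + 1) → Bool) :
    (((((List.range m).map fun k => ((k + 1 : ℕ) : Fin (m + 1))) ++ [0]) ++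
       (((List.range m).map fun k => ((m - k : ℕ) : Fin (m + 1))) ++ [0]) ++
       (((List.range m).map fun k => ((k + 1 : ℕ) : Fin (m + 1))) ++ [0])).filter p) =
    (((List.range m).filter fun k => p ((k + 1 : ℕ) : Fin (m + 1))).map
        fun k => ((k + 1 : ℕ) : Fin (m + 1))) ++ ([0].filter p) ++
    ((((List.range m).filter fun k => p ((m - k : ℕ) : Fin (m + 1))).map
        fun k => ((m - k : ℕ) : Fin (m + 1))) ++ ([0].filter p)) ++
    ((((List.range m).filter fun k => p ((k + 1 : ℕ) : Fin (m + 1))).map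
        fun k => ((k + 1 : ℕ) : Fin (m + 1))) ++ ([0].filter p)) := by
  simp only [List.filter_append, List.filter_map, Function.comp_def]

lemma val_pos_of_ne_zero {a : Fin (m + 1)} (ha : a ≠ 0) : 1 ≤ a.val := by
  rcases Nat.eq_zero_or_pos a.val with h | h
  · exact absurd (Fin.ext h) ha
  · exact h

lemma predA (a b : Fin (m + 1)) (k : ℕ) (hk : k < m) :
    (decide (((k + 1 : ℕ) : Fin (m + 1)) = a ∨ ((k + 1 : ℕ) : Fin (m + 1)) = b))
      = decide (k + 1 = a.val ∨ k + 1 = b.val) := by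
  rw [decide_eq_decide, fin_cast_eq_iff (k + 1) (by omega) a, fin_cast_eq_iff (k + 1) (by omega) b]

lemma predB (a b : Fin (m + 1)) (k : ℕ) :
    (decide (((m - k : ℕ) : Fin (m + 1)) = a ∨ ((m - k : ℕ) : Fin (m + 1)) = b))
      = decide (m - k = a.val ∨ m - k = b.val) := by
  rw [decide_eq_decide, fin_cast_eq_iff (m - k) (by omega) a, fin_cast_eq_iff (m - k) (by omega) b]

lemma alternates_center (b : Fin (m + 1)) (hb : b ≠ 0) :
    Alternates
      ((((List.range m).map fun k => ((k + 1 : ℕ) : Fin (m + 1))) ++ [0]) ++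
       (((List.range m).map fun k => ((m - k : ℕ) : Fin (m + 1))) ++ [0]) ++
       (((List.range m).map fun k => ((k + 1 : ℕ) : Fin (m + 1))) ++ [0]))
      (0 : Fin (m + 1)) b := by
  unfold Alternates
  have hbv : 1 ≤ b.val := val_pos_of_ne_zero hb
  have hbm : b.val ≤ m := by omega
  have hA : (List.range m).filter
      (fun k => decide (((k + 1 : ℕ) : Fin (m + 1)) = 0 ∨ ((k + 1 : ℕ) : Fin (m + 1)) = b))
      = [b.val - 1] := by
    apply filter_range_one (by omega)
    intro k hk
    rw [predA 0 b k hk, decide_eq_decide]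
    simp only [Fin.val_zero]
    omega
  have hB : (List.range m).filter
      (fun k => decide (((m - k : ℕ) : Fin (m + 1)) = 0 ∨ ((m - k : ℕ) : Fin (m + 1)) = b))
      = [m - b.val] := by
    apply filter_range_one (by omega)
    intro k hk
    rw [predB 0 b k, decide_eq_decide]
    simp only [Fin.val_zero]
    omega
  rw [filter_word, hA, hB]
  have e1 : (((b.val - 1 : ℕ) + 1 : ℕ) : Fin (m + 1)) = b := by
    rw [fin_cast_eq_iff _ (by omega)]; omega
  have e2 : ((m - (m - b.val) : ℕ) : Fin (m + 1)) = b := by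
    rw [fin_cast_eq_iff _ (by omega)]; omega
  have h0 : (decide ((0 : Fin (m + 1)) = 0 ∨ (0 : Fin (m + 1)) = b)) = true := by simp
  simp only [List.map_cons, List.map_nil, e1, e2, List.filter_cons, List.filter_nil, h0,
    if_true, List.cons_append, List.nil_append]
  simp [List.Chain', List.isChain_cons_cons, hb, Ne.symm hb]

lemma not_alternates_leaves (a b : Fin (m + 1)) (ha : a ≠ 0) (hb : b ≠ 0)
    (hab : a.val < b.val) :
    ¬ Alternates
      ((((List.range m).map fun k => ((k + 1 : ℕ) : Fin (m + 1))) ++ [0]) ++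
       (((List.range m).map fun k => ((m - k : ℕ) : Fin (m + 1))) ++ [0]) ++
       (((List.range m).map fun k => ((k + 1 : ℕ) : Fin (m + 1))) ++ [0]))
      a b := by
  unfold Alternates
  have hav : 1 ≤ a.val := val_pos_of_ne_zero ha
  have hbm : b.val ≤ m := by omega
  have hA : (List.range m).filter
      (fun k => decide (((k + 1 : ℕ) : Fin (m + 1)) = a ∨ ((k + 1 : ℕ) : Fin (m + 1)) = b))
      = [a.val - 1, b.val - 1] := by
    apply filter_range_two (by omega) (by omega)
    intro k hk
    rw [predA a b k hk, Bool.eq_iff_iff]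
    simp only [Bool.or_eq_true, decide_eq_true_eq]
    omega
  have hB : (List.range m).filter
      (fun k => decide (((m - k : ℕ) : Fin (m + 1)) = a ∨ ((m - k : ℕ) : Fin (m + 1)) = b))
      = [m - b.val, m - a.val] := by
    apply filter_range_two (by omega) (by omega)
    intro k hk
    rw [predB a b k, Bool.eq_iff_iff]
    simp only [Bool.or_eq_true, decide_eq_true_eq]
    omega
  have h0 : (decide ((0 : Fin (m + 1)) = a ∨ (0 : Fin (m + 1)) = b)) = false := by
    simp only [decide_eq_false_iff_not]
    rintro (h | h)
    · exact ha h.symm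
    · exact hb h.symm
  rw [filter_word, hA, hB]
  have ea : (((a.val - 1 : ℕ) + 1 : ℕ) : Fin (m + 1)) = a := by
    rw [fin_cast_eq_iff _ (by omega)]; omega
  have eb : (((b.val - 1 : ℕ) + 1 : ℕ) : Fin (m + 1)) = b := by
    rw [fin_cast_eq_iff _ (by omega)]; omega
  have ea' : ((m - (m - a.val) : ℕ) : Fin (m + 1)) = a := by
    rw [fin_cast_eq_iff _ (by omega)]; omega
  have eb' : ((m - (m - b.val) : ℕ) : Fin (m + 1)) = b := by
    rw [fin_cast_eq_iff _ (by omega)]; omega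
  simp only [List.map_cons, List.map_nil, ea, eb, ea', eb', List.filter_cons, List.filter_nil,
    h0, Bool.false_eq_true, if_false, List.cons_append, List.nil_append, List.append_nil]
  intro h
  simp only [List.Chain', List.isChain_cons_cons] at h
  exact h.2.1 rfl

end Main

open Fin.NatCast in
/-- The concatenation of `p₁ = 1 2 ⋯ m 0`, `p₂ = m (m−1) ⋯ 1 0` and `p₃ = 1 2 ⋯ m 0`
represents the star graph `K_{1,m}` permutationally. -/
theorem star_word_represents (m : ℕ) :
    Represents
      ((((List.range m).map fun k => ((k + 1 : ℕ) : Fin (m + 1))) ++ [0]) ++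
       (((List.range m).map fun k => ((m - k : ℕ) : Fin (m + 1))) ++ [0]) ++
       (((List.range m).map fun k => ((k + 1 : ℕ) : Fin (m + 1))) ++ [0]))
      (starGraph m) := by
  intro a b hab
  rw [starGraph, SimpleGraph.fromRel_adj]
  constructor
  · rintro ⟨-, (rfl | rfl)⟩
    · exact alternates_center b (Ne.symm hab)
    · exact (alternates_comm _ _ _).mpr (alternates_center a hab)
  · intro h
    refine ⟨hab, ?_⟩
    by_contra hc
    push_neg at hc
    obtain ⟨ha, hb⟩ := hc
    rcases Nat.lt_or_ge a.val b.val with hlt | hge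
    · exact not_alternates_leaves a b ha hb hlt h
    · have hlt : b.val < a.val := by
        rcases Nat.lt_or_ge b.val a.val with h' | h'
        · exact h'
        · exact absurd (Fin.ext (by omega)) hab
      exact not_alternates_leaves b a hb ha hlt ((alternates_comm _ _ _).mp h)
end
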